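/- arXiv:2307.15616 — 8 statements merged into one kernel-verified Lean document; each statement's English description precedes it below -/
import Mathlib

section
/- Let p ∈ (1, ∞) with conjugate exponent q (1/p + 1/q = 1). If H^{n₁} ⊆ S_p^{n₁} is a hitting set with hitting ratio τ ≥ 0 (i.e., for every x ∈ S_q^{n₁} there exists v ∈ H^{n₁} with xᵀv ≥ τ), then the set E^{n₂} ⊠ H^{n₁} := { e_j ⊠ v : j = 1,…,n₂, v ∈ H^{n₁} } is a hitting set of S_p^{n₁n₂} with hitting ratio τ / n₂^{1/q}. -/
open scoped BigOperators

/-- The vector `ℓ_p`-norm for finite `p`. -/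
noncomputable def pNorm (p : ℝ) {ι : Type*} [Fintype ι] (x : ι → ℝ) : ℝ :=
  (∑ i, |x i| ^ p) ^ (1 / p)

/-- `H` is a hitting set of the `ℓ_p`-sphere with hitting ratio `τ`: every vector of `H`
lies on the `ℓ_p`-sphere, and every `x` on the `ℓ_q`-sphere satisfies `xᵀv ≥ τ` for some
`v ∈ H`. -/
def IsHittingSet (p q τ : ℝ) {ι : Type*} [Fintype ι] (H : Set (ι → ℝ)) : Prop :=
  (∀ v ∈ H, pNorm p v = 1) ∧
    ∀ x : ι → ℝ, pNorm q x = 1 → ∃ v ∈ H, τ ≤ ∑ i, x i * v i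


/-- If `H ⊆ S_p^(n₁)` is a `τ`-hitting set (`τ ≥ 0`), then
`E^(n₂) ⊠ H = { e_j ⊠ v : j, v ∈ H }` is a hitting set of `S_p^(n₁ n₂)` with hitting
ratio `τ / n₂^(1/q)`. -/
theorem stmt7 (p q τ : ℝ) (hp : 1 < p) (hpq : 1 / p + 1 / q = 1) (hτ : 0 ≤ τ)
    (n₁ n₂ : ℕ) (H : Set (Fin n₁ → ℝ)) (hH : IsHittingSet p q τ H) :
    IsHittingSet p q (τ / (n₂ : ℝ) ^ (1 / q))
      { w : Fin n₂ × Fin n₁ → ℝ |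
        ∃ j : Fin n₂, ∃ v ∈ H, w = fun s => if s.1 = j then v s.2 else 0 } := by
  have hp0 : (0:ℝ) < p := lt_trans one_pos hp
  have hq1 : 0 < 1 / q := by
    have h : 1 / q = 1 - 1 / p := by linarith
    rw [h]
    have : 1 / p < 1 := by rw [div_lt_one hp0]; exact hp
    linarith
  have hq0 : 0 < q := one_div_pos.mp hq1
  constructor
  · rintro w ⟨j, v, hv, rfl⟩
    have h1 := hH.1 v hv
    unfold pNorm at h1 ⊢
    rw [Fintype.sum_prod_type]
    have key : ∀ j' : Fin n₂, (∑ i, |if ((j', i) : Fin n₂ × Fin n₁).1 = j then v ((j', i) : Fin n₂ × Fin n₁).2 else 0| ^ p)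
        = if j' = j then ∑ i, |v i| ^ p else 0 := by
      intro j'
      by_cases h : j' = j <;> simp [h, Real.zero_rpow (ne_of_gt hp0)]
    simp only [key]
    rw [Finset.sum_ite_eq' Finset.univ j (fun _ => ∑ i, |v i| ^ p)]
    simpa using h1
  · intro x hx
    set f : Fin n₂ → ℝ := fun j => ∑ i, |x (j, i)| ^ q with hf
    have hfnn : ∀ j, 0 ≤ f j := fun j =>
      Finset.sum_nonneg fun i _ => Real.rpow_nonneg (abs_nonneg _) _
    have hsum : ∑ j, f j = 1 := by
      unfold pNorm at hx
      rw [Fintype.sum_prod_type] at hx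
      have hS : 0 ≤ ∑ j, f j := Finset.sum_nonneg fun j _ => hfnn j
      have h2 := congrArg (fun t => t ^ q) hx
      have h3 : ((∑ j, f j) ^ (1 / q)) ^ q = (1:ℝ) ^ q := h2
      rwa [← Real.rpow_mul hS, one_div_mul_cancel (ne_of_gt hq0), Real.rpow_one, Real.one_rpow] at h3
    have hn₂ : 0 < n₂ := by
      by_contra h
      push_neg at h
      interval_cases n₂
      simp at hsum
    haveI : Nonempty (Fin n₂) := ⟨⟨0, hn₂⟩⟩
    obtain ⟨j, -, hj⟩ := Finset.exists_max_image Finset.univ f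
      ⟨Classical.arbitrary _, Finset.mem_univ _⟩
    have hjbig : 1 / (n₂ : ℝ) ≤ f j := by
      have hle : ∑ j', f j' ≤ n₂ * f j := by
        calc ∑ j', f j' ≤ ∑ _j' : Fin n₂, f j :=
              Finset.sum_le_sum fun j' _ => hj j' (Finset.mem_univ _)
          _ = n₂ * f j := by simp [mul_comm]
      rw [hsum] at hle
      rw [div_le_iff₀ (by exact_mod_cast hn₂)]
      linarith
    have hfj : 0 < f j := lt_of_lt_of_le (by positivity) hjbig
    set a : ℝ := (f j) ^ (1 / q) with ha
    have ha0 : 0 < a := Real.rpow_pos_of_pos hfj _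
    have haq : a ^ q = f j := by
      rw [ha, ← Real.rpow_mul hfj.le, one_div_mul_cancel (ne_of_gt hq0), Real.rpow_one]
    set y : Fin n₁ → ℝ := fun i => x (j, i) / a with hy
    have hynorm : pNorm q y = 1 := by
      unfold pNorm
      have : ∀ i, |y i| ^ q = |x (j, i)| ^ q / a ^ q := by
        intro i
        rw [hy, abs_div, abs_of_pos ha0, Real.div_rpow (abs_nonneg _) ha0.le]
      simp only [this, ← Finset.sum_div, haq]
      rw [div_self (ne_of_gt hfj), Real.one_rpow]
    obtain ⟨v, hv, hτv⟩ := hH.2 y hynorm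
    refine ⟨_, ⟨j, v, hv, rfl⟩, ?_⟩
    have hsum2 : (∑ s : Fin n₂ × Fin n₁, x s * (if s.1 = j then v s.2 else 0))
        = ∑ i, x (j, i) * v i := by
      rw [Fintype.sum_prod_type]
      have key : ∀ j' : Fin n₂, (∑ i, x (j', i) * (if j' = j then v i else 0))
          = if j' = j then ∑ i, x (j, i) * v i else 0 := by
        intro j'
        by_cases h : j' = j <;> simp [h]
      simp only [key]
      simp
    have hys : ∑ i, y i * v i = (∑ i, x (j, i) * v i) / a := by
      simp only [hy, div_mul_eq_mul_div, ← Finset.sum_div]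
    rw [hys] at hτv
    have h3 : τ * a ≤ ∑ i, x (j, i) * v i := (le_div_iff₀ ha0).mp hτv
    have h4 : 1 / (n₂ : ℝ) ^ (1 / q) ≤ a := by
      have h5 : ((1 : ℝ) / n₂) ^ (1/q) ≤ a := by
        rw [ha]
        exact Real.rpow_le_rpow (by positivity) hjbig (le_of_lt hq1)
      rwa [Real.div_rpow zero_le_one (Nat.cast_nonneg n₂), Real.one_rpow] at h5
    calc τ / (n₂ : ℝ) ^ (1 / q) = τ * (1 / (n₂ : ℝ) ^ (1 / q)) := by ring
      _ ≤ τ * a := by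
          exact mul_le_mul_of_nonneg_left h4 hτ
      _ ≤ _ := hsum2 ▸ h3
end

section
/- Let p ∈ (1, ∞) with conjugate exponent q. If H^{n₁} ⊆ S_p^{n₁} is a τ₁-hitting set (τ₁ > 0) and H^{n₂} ⊆ S_p^{n₂} is a τ₂-hitting set (τ₂ > 0), then the set (H^{n₁} ∨ 0_{n₂}) ∪ (0_{n₁} ∨ H^{n₂}) of appended vectors is a hitting set of S_p^{n₁+n₂} with hitting ratio τ₁τ₂ / (τ₁^q + τ₂^q)^{1/q}. -/
open scoped BigOperators

lemma key (q τa τb : ℝ) (hq : 0 < q) (hτa : 0 < τa) (hτb : 0 < τb)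
    {ι : Type*} [Fintype ι] (H : Set (ι → ℝ))
    (hH : ∀ x : ι → ℝ, pNorm q x = 1 → ∃ v ∈ H, τa ≤ ∑ i, x i * v i)
    (x : ι → ℝ)
    (hcase : τb ^ q ≤ (∑ i, |x i| ^ q) * (τa ^ q + τb ^ q)) :
    ∃ v ∈ H, τa * τb / (τa ^ q + τb ^ q) ^ (1 / q) ≤ ∑ i, x i * v i := by
  set S : ℝ := ∑ i, |x i| ^ q with hSdef
  have hT : 0 < τa ^ q + τb ^ q := by positivity
  have hτbq : 0 < τb ^ q := Real.rpow_pos_of_pos hτb q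
  have hS0 : 0 < S := by
    have h1 : τb ^ q / (τa ^ q + τb ^ q) ≤ S := (div_le_iff₀ hT).mpr hcase
    have : 0 < τb ^ q / (τa ^ q + τb ^ q) := by positivity
    linarith
  set a : ℝ := S ^ (1 / q) with hadef
  have ha : 0 < a := Real.rpow_pos_of_pos hS0 _
  have haq : a ^ q = S := by
    rw [hadef, ← Real.rpow_mul hS0.le, one_div_mul_cancel hq.ne', Real.rpow_one]
  have hy : pNorm q (fun i => x i / a) = 1 := by
    unfold pNorm
    simp only
    simp_rw [abs_div, abs_of_pos ha, Real.div_rpow (abs_nonneg _) ha.le, haq]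
    rw [← Finset.sum_div, ← hSdef, div_self hS0.ne', Real.one_rpow]
  obtain ⟨v, hv, hvx⟩ := hH _ hy
  refine ⟨v, hv, ?_⟩
  have hsum : τa * a ≤ ∑ i, x i * v i := by
    have h2 : τa ≤ (∑ i, x i * v i) / a := by
      simpa [div_mul_eq_mul_div, ← Finset.sum_div] using hvx
    calc τa * a ≤ ((∑ i, x i * v i) / a) * a := by
          exact mul_le_mul_of_nonneg_right h2 ha.le
      _ = ∑ i, x i * v i := by field_simp
  have hab : τb / (τa ^ q + τb ^ q) ^ (1 / q) ≤ a := by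
    have h1 : τb ^ q / (τa ^ q + τb ^ q) ≤ S := (div_le_iff₀ hT).mpr hcase
    have h3 := Real.rpow_le_rpow (by positivity) h1 (by positivity : (0:ℝ) ≤ 1 / q)
    have h4 : (τb ^ q) ^ (1 / q : ℝ) = τb := by
      rw [← Real.rpow_mul hτb.le, mul_one_div_cancel hq.ne', Real.rpow_one]
    rwa [Real.div_rpow hτbq.le hT.le, h4] at h3
  calc τa * τb / (τa ^ q + τb ^ q) ^ (1 / q)
      = τa * (τb / (τa ^ q + τb ^ q) ^ (1 / q)) := by ring
    _ ≤ τa * a := mul_le_mul_of_nonneg_left hab hτa.le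
    _ ≤ ∑ i, x i * v i := hsum

/-- If `H₁ ⊆ S_p^(n₁)` is a `τ₁`-hitting set and `H₂ ⊆ S_p^(n₂)` is a `τ₂`-hitting set
(`τ₁, τ₂ > 0`), then `(H₁ ∨ 0) ∪ (0 ∨ H₂)` is a hitting set of `S_p^(n₁+n₂)` with hitting
ratio `τ₁τ₂ / (τ₁^q + τ₂^q)^(1/q)`. -/
theorem stmt8 (p q τ₁ τ₂ : ℝ) (hp : 1 < p) (hpq : 1 / p + 1 / q = 1)
    (hτ₁ : 0 < τ₁) (hτ₂ : 0 < τ₂) (n₁ n₂ : ℕ)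
    (H₁ : Set (Fin n₁ → ℝ)) (H₂ : Set (Fin n₂ → ℝ))
    (hH₁ : IsHittingSet p q τ₁ H₁) (hH₂ : IsHittingSet p q τ₂ H₂) :
    IsHittingSet p q (τ₁ * τ₂ / (τ₁ ^ q + τ₂ ^ q) ^ (1 / q))
      (((fun v => Sum.elim v 0) '' H₁ ∪ (fun w => Sum.elim 0 w) '' H₂ :
        Set (Fin n₁ ⊕ Fin n₂ → ℝ))) := by
  have hcon : Real.HolderConjugate p q := Real.holderConjugate_iff.mpr ⟨hp, by rw [one_div, one_div] at hpq; exact hpq⟩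
  have hq1 : 1 < q := hcon.symm.lt
  have hq0 : 0 < q := lt_trans one_pos hq1
  have hp0 : 0 < p := lt_trans one_pos hp
  constructor
  · rintro w (⟨v, hv, rfl⟩ | ⟨w', hw', rfl⟩)
    · have h := hH₁.1 v hv
      unfold pNorm at h ⊢
      rw [Fintype.sum_sum_type]
      simpa [Real.zero_rpow hp0.ne'] using h
    · have h := hH₂.1 w' hw'
      unfold pNorm at h ⊢
      rw [Fintype.sum_sum_type]
      simpa [Real.zero_rpow hp0.ne'] using h
  · intro x hx
    set S₁ : ℝ := ∑ i, |x (Sum.inl i)| ^ q with hS₁def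
    set S₂ : ℝ := ∑ i, |x (Sum.inr i)| ^ q with hS₂def
    have hsplit : (∑ i, |x i| ^ q) = S₁ + S₂ := Fintype.sum_sum_type _
    have hS : S₁ + S₂ = 1 := by
      unfold pNorm at hx
      rw [hsplit] at hx
      have h0 : (0:ℝ) ≤ S₁ + S₂ := by positivity
      calc S₁ + S₂ = ((S₁ + S₂) ^ (1 / q : ℝ)) ^ q := by
            rw [← Real.rpow_mul h0, one_div_mul_cancel hq0.ne', Real.rpow_one]
        _ = (1 : ℝ) ^ q := by rw [hx]
        _ = 1 := Real.one_rpow q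
    have hT : 0 < τ₁ ^ q + τ₂ ^ q := by positivity
    by_cases hc : τ₂ ^ q ≤ S₁ * (τ₁ ^ q + τ₂ ^ q)
    · obtain ⟨v, hv, hle⟩ := key q τ₁ τ₂ hq0 hτ₁ hτ₂ H₁ hH₁.2
        (fun i => x (Sum.inl i)) (by simpa using hc)
      refine ⟨Sum.elim v 0, Or.inl ⟨v, hv, rfl⟩, ?_⟩
      rw [Fintype.sum_sum_type]
      simpa using hle
    · push_neg at hc
      have hc' : τ₁ ^ q ≤ S₂ * (τ₁ ^ q + τ₂ ^ q) := by nlinarith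
      obtain ⟨v, hv, hle⟩ := key q τ₂ τ₁ hq0 hτ₂ hτ₁ H₂ hH₂.2
        (fun i => x (Sum.inr i)) (by simpa [add_comm] using hc')
      refine ⟨Sum.elim 0 v, Or.inr ⟨v, hv, rfl⟩, ?_⟩
      rw [Fintype.sum_sum_type]
      have : τ₂ * τ₁ / (τ₂ ^ q + τ₁ ^ q) ^ (1 / q)
          = τ₁ * τ₂ / (τ₁ ^ q + τ₂ ^ q) ^ (1 / q) := by rw [mul_comm, add_comm]
      rw [this] at hle
      simpa using hle
end

section
/- Let p ∈ (1, ∞), n₁ ≤ n₂, and let H^{n₂} ⊆ S_p^{n₂} be a hitting set with hitting ratio τ > 0 and cardinality at most m. Then the set H^{n₁} := { z/‖z‖_p : z ∈ ℝ^{n₁}, z ≠ 0, and z ∨ y ∈ H^{n₂} for some y ∈ ℝ^{n₂−n₁} } is a hitting set of S_p^{n₁} with hitting ratio at least τ and cardinality at most m. -/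
open scoped BigOperators

/-- The set of vectors obtained by cutting the first `n₁` coordinates of vectors in `H`
(whenever nonzero) and renormalizing. -/
noncomputable def cutSet (p : ℝ) (n₁ n₂ : ℕ) (H : Set (Fin n₁ ⊕ Fin n₂ → ℝ)) :
    Set (Fin n₁ → ℝ) :=
  { w | ∃ z : Fin n₁ → ℝ, z ≠ 0 ∧ (∃ y : Fin n₂ → ℝ, Sum.elim z y ∈ H) ∧
      w = fun i => z i / pNorm p z }

lemma pNorm_pos {p : ℝ} (hp : 0 < p) {ι : Type*} [Fintype ι] {x : ι → ℝ} (hx : x ≠ 0) :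
    0 < pNorm p x := by
  unfold pNorm
  apply Real.rpow_pos_of_pos
  obtain ⟨i, hi⟩ := Function.ne_iff.mp hx
  refine Finset.sum_pos' (fun j _ => by positivity) ⟨i, Finset.mem_univ i, ?_⟩
  have : (0:ℝ) < |x i| := abs_pos.mpr hi
  positivity

lemma pNorm_rpow {p : ℝ} (hp : 0 < p) {ι : Type*} [Fintype ι] (x : ι → ℝ) :
    pNorm p x ^ p = ∑ i, |x i| ^ p := by
  unfold pNorm
  rw [← Real.rpow_mul (by positivity), one_div_mul_cancel (ne_of_gt hp), Real.rpow_one]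

/-- If `H ⊆ S_p^(n₁+n₂)` is a `τ`-hitting set (`τ > 0`) of cardinality at most `M`, then
cutting to the first `n₁` coordinates yields a `τ`-hitting set of `S_p^(n₁)` of
cardinality at most `M`. -/
theorem stmt9 (p q τ : ℝ) (hp : 1 < p) (hpq : 1 / p + 1 / q = 1) (hτ : 0 < τ)
    (n₁ n₂ M : ℕ) (H : Set (Fin n₁ ⊕ Fin n₂ → ℝ))
    (hH : IsHittingSet p q τ H) (hfin : H.Finite) (hcard : H.ncard ≤ M) :
    IsHittingSet p q τ (cutSet p n₁ n₂ H) ∧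
      (cutSet p n₁ n₂ H).Finite ∧ (cutSet p n₁ n₂ H).ncard ≤ M := by
  have hp0 : 0 < p := lt_trans one_pos hp
  have hq0 : 0 < q := by
    have h2 : 1 / p < 1 := by rw [div_lt_one hp0]; exact hp
    have : 0 < 1 / q := by linarith
    exact one_div_pos.mp this
  obtain ⟨hHnorm, hHhit⟩ := hH
  -- norms of cut vectors
  have cut_norm : ∀ w ∈ cutSet p n₁ n₂ H, pNorm p w = 1 := by
    rintro w ⟨z, hz, -, rfl⟩
    have hc : 0 < pNorm p z := pNorm_pos hp0 hz
    have hS := pNorm_rpow hp0 z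
    conv_lhs => rw [pNorm]
    have habs : ∀ i, |z i / pNorm p z| ^ p = |z i| ^ p / pNorm p z ^ p := by
      intro i
      rw [abs_div, abs_of_pos hc, Real.div_rpow (abs_nonneg _) hc.le]
    simp_rw [habs]
    rw [← Finset.sum_div, ← hS, div_self (by positivity), Real.one_rpow]
  refine ⟨⟨cut_norm, ?_⟩, ?_, ?_⟩
  · -- hitting property
    intro x hx
    have hx' : pNorm q (Sum.elim x (0 : Fin n₂ → ℝ)) = 1 := by
      unfold pNorm at hx ⊢
      rw [Fintype.sum_sum_type]
      simpa [Real.zero_rpow (ne_of_gt hq0)] using hx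
    obtain ⟨v, hvH, hv⟩ := hHhit _ hx'
    set z : Fin n₁ → ℝ := fun i => v (Sum.inl i) with hzdef
    have hsum : ∑ i, Sum.elim x (0 : Fin n₂ → ℝ) i * v i = ∑ i, x i * z i := by
      rw [Fintype.sum_sum_type]; simp [hzdef]
    rw [hsum] at hv
    have hz : z ≠ 0 := by
      intro h0
      rw [h0] at hv
      simp at hv
      linarith
    have hc : 0 < pNorm p z := pNorm_pos hp0 hz
    have hc1 : pNorm p z ≤ 1 := by
      have hle : ∑ i, |z i| ^ p ≤ ∑ i, |v i| ^ p := by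
        rw [Fintype.sum_sum_type]
        have : (0:ℝ) ≤ ∑ i : Fin n₂, |v (Sum.inr i)| ^ p := by positivity
        simp only [hzdef]
        linarith
      have h1 : pNorm p v = 1 := hHnorm v hvH
      calc pNorm p z ≤ pNorm p v := by
            unfold pNorm
            exact Real.rpow_le_rpow (by positivity) hle (by positivity)
        _ = 1 := h1
    refine ⟨fun i => z i / pNorm p z, ⟨z, hz, ⟨fun i => v (Sum.inr i), ?_⟩, rfl⟩, ?_⟩
    · have : Sum.elim z (fun i => v (Sum.inr i)) = v := by
        funext j; cases j <;> simp [hzdef]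
      rw [this]; exact hvH
    · have : ∑ i, x i * (z i / pNorm p z) = (∑ i, x i * z i) / pNorm p z := by
        rw [Finset.sum_div]; congr 1; funext i; ring
      rw [this]
      rw [le_div_iff₀ hc]
      nlinarith
  · exact (hfin.image _).subset (by
      rintro w ⟨z, hz, ⟨y, hy⟩, rfl⟩
      exact ⟨Sum.elim z y, hy, by funext i; simp⟩ :
      cutSet p n₁ n₂ H ⊆
        (fun v : Fin n₁ ⊕ Fin n₂ → ℝ =>
          fun i => v (Sum.inl i) / pNorm p (fun j => v (Sum.inl j))) '' H)
  · calc (cutSet p n₁ n₂ H).ncard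
        ≤ ((fun v : Fin n₁ ⊕ Fin n₂ → ℝ =>
            fun i => v (Sum.inl i) / pNorm p (fun j => v (Sum.inl j))) '' H).ncard := by
          apply Set.ncard_le_ncard ?_ (hfin.image _)
          rintro w ⟨z, hz, ⟨y, hy⟩, rfl⟩
          exact ⟨Sum.elim z y, hy, by funext i; simp⟩
      _ ≤ H.ncard := Set.ncard_image_le hfin
      _ ≤ M := hcard
end

section
/- For any p ∈ [1, ∞], m, n ∈ ℕ, any x ∈ S_p^n admits y ∈ H where H = { w/‖w‖_p : w ≠ 0, each w_i ∈ {0, ±1/m, ±2/m, …, ±1} } — specifically the vector y = w/‖w‖_p with w_i = ⌈m x_i⌉/m if x_i ≥ 0 and w_i = ⌊m x_i⌋/m if x_i < 0 — such that for every z ∈ ℝ^n: if yᵀz ≥ 0 then yᵀz − ‖z‖_1/m ≤ xᵀz ≤ (1 + n^{1/p}/m) yᵀz + ‖z‖_1/m; and if yᵀz < 0 then (1 + n^{1/p}/m) yᵀz − ‖z‖_1/m ≤ xᵀz ≤ yᵀz + ‖z‖_1/m. -/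
open scoped ENNReal BigOperators

/-- The vector `ℓ_p`-norm for `p ∈ [1,∞]` (extended-real exponent). -/
noncomputable def lpNorm (p : ℝ≥0∞) {ι : Type*} [Fintype ι] (x : ι → ℝ) : ℝ :=
  if p = ∞ then ⨆ i, |x i| else (∑ i, |x i| ^ p.toReal) ^ (1 / p.toReal)


/-- Round each entry of `x` away from zero to the grid `{ j/m : j ∈ ℤ }`. -/
noncomputable def gridw (m n : ℕ) (x : Fin n → ℝ) : Fin n → ℝ := fun i =>
  if 0 ≤ x i then (⌈(m : ℝ) * x i⌉ : ℝ) / m else (⌊(m : ℝ) * x i⌋ : ℝ) / m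

lemma gridw_facts {m n : ℕ} (hm : 0 < m) (x : Fin n → ℝ) (i : Fin n) :
    |x i| ≤ |gridw m n x i| ∧ |gridw m n x i - x i| ≤ 1 / m := by
  have hm' : (0:ℝ) < m := by exact_mod_cast hm
  have h1m : (0:ℝ) < 1 / m := by positivity
  by_cases h : 0 ≤ x i
  · have hg : gridw m n x i = (⌈(m : ℝ) * x i⌉ : ℝ) / m := by simp [gridw, h]
    have hle : x i ≤ gridw m n x i := by
      rw [hg, le_div_iff₀ hm']; nlinarith [Int.le_ceil ((m:ℝ) * x i)]
    have hub : gridw m n x i ≤ x i + 1 / m := by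
      rw [hg, div_le_iff₀ hm']
      have := Int.ceil_lt_add_one ((m:ℝ) * x i)
      have e1 : (x i + 1 / m) * m = x i * m + 1 := by field_simp
      nlinarith
    refine ⟨?_, ?_⟩
    · rw [abs_of_nonneg h, abs_of_nonneg (le_trans h hle)]; exact hle
    · rw [abs_le]; constructor <;> linarith
  · push_neg at h
    have hg : gridw m n x i = (⌊(m : ℝ) * x i⌋ : ℝ) / m := by
      simp [gridw, not_le.mpr h]
    have hle : gridw m n x i ≤ x i := by
      rw [hg, div_le_iff₀ hm']; nlinarith [Int.floor_le ((m:ℝ) * x i)]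
    have hub : x i - 1 / m ≤ gridw m n x i := by
      rw [hg, le_div_iff₀ hm']
      have := Int.lt_floor_add_one ((m:ℝ) * x i)
      have e1 : (x i - 1 / m) * m = x i * m - 1 := by field_simp
      nlinarith
    refine ⟨?_, ?_⟩
    · rw [abs_of_neg h, abs_of_nonpos (le_trans hle h.le)]; linarith
    · rw [abs_le]; constructor <;> linarith

lemma gridw_int {m n : ℕ} (hm : 0 < m) (x : Fin n → ℝ) (i : Fin n) (hxi : |x i| ≤ 1) :
    ∃ j : ℤ, |j| ≤ (m : ℤ) ∧ gridw m n x i = (j : ℝ) / m := by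
  have hm' : (0:ℝ) < m := by exact_mod_cast hm
  rw [abs_le] at hxi
  by_cases h : 0 ≤ x i
  · refine ⟨⌈(m : ℝ) * x i⌉, ?_, by simp [gridw, h]⟩
    rw [abs_le]
    constructor
    · have : (0:ℤ) ≤ ⌈(m : ℝ) * x i⌉ := Int.ceil_nonneg (by positivity)
      omega
    · rw [Int.ceil_le]; push_cast; nlinarith [hxi.2]
  · push_neg at h
    refine ⟨⌊(m : ℝ) * x i⌋, ?_, by simp [gridw, not_le.mpr h]⟩
    rw [abs_le]
    constructor
    · have : -(m:ℤ) ≤ ⌊(m:ℝ) * x i⌋ := Int.le_floor.mpr (by push_cast; nlinarith [hxi.1])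
      omega
    · have : ⌊(m : ℝ) * x i⌋ ≤ 0 := Int.floor_nonpos (by nlinarith)
      omega

lemma lp_facts (p : ℝ≥0∞) (hp : 1 ≤ p) (n m : ℕ) (hm : 0 < m)
    (x : Fin n → ℝ) (hx : lpNorm p x = 1) :
    (∀ i, |x i| ≤ 1) ∧ (∃ i, x i ≠ 0) ∧ 1 ≤ lpNorm p (gridw m n x) ∧
      lpNorm p (gridw m n x) ≤ 1 + (n : ℝ) ^ (1 / p).toReal / m := by
  have hm' : (0:ℝ) < m := by exact_mod_cast hm
  by_cases hpi : p = ∞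
  · subst hpi
    simp only [lpNorm, if_pos rfl] at hx ⊢
    have hne : Nonempty (Fin n) := by
      rcases isEmpty_or_nonempty (Fin n) with h | h
      · exfalso; rw [Real.iSup_of_isEmpty] at hx; norm_num at hx
      · exact h
    have hbdd : ∀ v : Fin n → ℝ, BddAbove (Set.range fun i => |v i|) :=
      fun v => (Set.finite_range _).bddAbove
    have hc : (1 / (∞:ℝ≥0∞)).toReal = 0 := by simp
    rw [hc, Real.rpow_zero]
    refine ⟨fun i => hx ▸ le_ciSup (hbdd x) i, ?_, ?_, ?_⟩
    · by_contra hz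
      push_neg at hz
      have : (⨆ i, |x i|) = 0 := by
        simp only [hz, abs_zero]; exact ciSup_const
      rw [this] at hx; norm_num at hx
    · calc (1:ℝ) = ⨆ i, |x i| := hx.symm
        _ ≤ ⨆ i, |gridw m n x i| := ciSup_mono (hbdd _) fun i => (gridw_facts hm x i).1
    · refine ciSup_le fun i => ?_
      have h1 := (gridw_facts hm x i).2
      have h2 : |x i| ≤ 1 := hx ▸ le_ciSup (hbdd x) i
      have : |gridw m n x i| ≤ |x i| + 1/m := by
        have := abs_sub_abs_le_abs_sub (gridw m n x i) (x i)
        linarith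
      linarith
  · have hr : 1 ≤ p.toReal := by
      have := ENNReal.toReal_mono hpi hp
      simpa using this
    set r := p.toReal with hrdef
    have hr0 : (0:ℝ) < r := by linarith
    simp only [lpNorm, if_neg hpi] at hx ⊢
    have hcp : (1 / p).toReal = r⁻¹ := by
      rw [one_div, ENNReal.toReal_inv]
    have hsum : ∑ i, |x i| ^ r = 1 := by
      have h0 : (0:ℝ) ≤ ∑ i, |x i| ^ r :=
        Finset.sum_nonneg fun i _ => Real.rpow_nonneg (abs_nonneg _) _
      have := congrArg (fun t => t ^ r) hx
      simpa [← hrdef, ← Real.rpow_natCast, one_div, Real.rpow_inv_rpow h0 hr0.ne',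
        Real.one_rpow] using this
    have ha : ∀ i, |x i| ≤ 1 := by
      intro i
      by_contra h
      push_neg at h
      have h1 : |x i| ^ r ≤ ∑ j, |x j| ^ r :=
        Finset.single_le_sum (fun j _ => Real.rpow_nonneg (abs_nonneg _) _) (Finset.mem_univ i)
      have h2 : (1:ℝ) < |x i| ^ r :=
        Real.one_lt_rpow_iff_of_pos (by linarith) |>.mpr (Or.inl ⟨h, hr0⟩)
      rw [hsum] at h1; linarith
    refine ⟨ha, ?_, ?_, ?_⟩
    · by_contra hz
      push_neg at hz
      have : ∑ i, |x i| ^ r = 0 := by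
        simp [hz, Real.zero_rpow hr0.ne']
      rw [this] at hsum; norm_num at hsum
    · have h1 : (1:ℝ) ≤ ∑ i, |gridw m n x i| ^ r := by
        rw [← hsum]
        exact Finset.sum_le_sum fun i _ =>
          Real.rpow_le_rpow (abs_nonneg _) (gridw_facts hm x i).1 hr0.le
      calc (1:ℝ) = 1 ^ (1/r) := (Real.one_rpow _).symm
        _ ≤ (∑ i, |gridw m n x i| ^ r) ^ (1/r) :=
            Real.rpow_le_rpow zero_le_one h1 (by positivity)
    · rw [hcp]
      have hmink := Real.Lp_add_le Finset.univ x (fun i => gridw m n x i - x i) hr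
      have he : ∀ i, x i + (gridw m n x i - x i) = gridw m n x i := fun i => by ring
      simp only [he] at hmink
      have h2 : (∑ i, |gridw m n x i - x i| ^ r) ^ (1/r) ≤ (n:ℝ) ^ r⁻¹ / m := by
        have hb : ∑ i, |gridw m n x i - x i| ^ r ≤ (n:ℝ) * (1/m) ^ r := by
          calc ∑ i, |gridw m n x i - x i| ^ r ≤ ∑ _i : Fin n, (1/(m:ℝ)) ^ r :=
              Finset.sum_le_sum fun i _ =>
                Real.rpow_le_rpow (abs_nonneg _) (gridw_facts hm x i).2 hr0.le
            _ = (n:ℝ) * (1/m) ^ r := by simp [Finset.sum_const, mul_comm]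
        calc (∑ i, |gridw m n x i - x i| ^ r) ^ (1/r)
            ≤ ((n:ℝ) * (1/m) ^ r) ^ (1/r) := by
              apply Real.rpow_le_rpow (Finset.sum_nonneg fun i _ =>
                Real.rpow_nonneg (abs_nonneg _) _) hb (by positivity)
          _ = (n:ℝ) ^ r⁻¹ / m := by
              simp only [one_div]
              rw [Real.mul_rpow (by positivity) (by positivity),
                Real.rpow_rpow_inv (by positivity) hr0.ne']
              ring
      have h1 : (∑ i, |x i| ^ r) ^ (1/r) = 1 := hx
      calc (∑ i, |gridw m n x i| ^ r) ^ (1/r)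
          ≤ (∑ i, |x i| ^ r) ^ (1/r) + (∑ i, |gridw m n x i - x i| ^ r) ^ (1/r) := hmink
        _ ≤ 1 + (n:ℝ) ^ r⁻¹ / m := by rw [h1]; linarith


/-- For any `x ∈ S_p^n` there is a grid point `y = w/‖w‖_p` (with `w` the rounding of
`x`, entries in `(0, ±1/m, …, ±1)`, `w ≠ 0`) such that for every `z ∈ ℝ^n`:
if `yᵀz ≥ 0` then `yᵀz − ‖z‖₁/m ≤ xᵀz ≤ (1 + n^(1/p)/m) yᵀz + ‖z‖₁/m`, and if
`yᵀz < 0` then `(1 + n^(1/p)/m) yᵀz − ‖z‖₁/m ≤ xᵀz ≤ yᵀz + ‖z‖₁/m`. -/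
theorem stmt11 (p : ℝ≥0∞) (hp : 1 ≤ p) (n m : ℕ) (hm : 0 < m)
    (x : Fin n → ℝ) (hx : lpNorm p x = 1)
    (y : Fin n → ℝ) (hy : y = fun i => gridw m n x i / lpNorm p (gridw m n x)) :
    (∀ i, ∃ j : ℤ, |j| ≤ (m : ℤ) ∧ gridw m n x i = (j : ℝ) / m) ∧
    gridw m n x ≠ 0 ∧
    ∀ z : Fin n → ℝ,
      (0 ≤ ∑ i, y i * z i →
        (∑ i, y i * z i) - (∑ i, |z i|) / m ≤ ∑ i, x i * z i ∧
        ∑ i, x i * z i ≤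
          (1 + (n : ℝ) ^ (1 / p).toReal / m) * (∑ i, y i * z i) + (∑ i, |z i|) / m) ∧
      ((∑ i, y i * z i) < 0 →
        (1 + (n : ℝ) ^ (1 / p).toReal / m) * (∑ i, y i * z i) - (∑ i, |z i|) / m ≤
          ∑ i, x i * z i ∧
        ∑ i, x i * z i ≤ (∑ i, y i * z i) + (∑ i, |z i|) / m) := by
  have hm' : (0:ℝ) < m := by exact_mod_cast hm
  obtain ⟨ha, ⟨i0, hi0⟩, hN1, hN2⟩ := lp_facts p hp n m hm x hx
  set w := gridw m n x with hwdef
  set N := lpNorm p w with hNdef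
  set C := (n : ℝ) ^ (1 / p).toReal / m with hCdef
  have hC0 : 0 ≤ C := by positivity
  have hN0 : (0:ℝ) < N := lt_of_lt_of_le one_pos hN1
  refine ⟨fun i => gridw_int hm x i (ha i), ?_, ?_⟩
  · intro h
    have : |x i0| ≤ |w i0| := (gridw_facts hm x i0).1
    rw [h] at this
    simp only [Pi.zero_apply, abs_zero] at this
    exact hi0 (abs_nonpos_iff.mp this)
  intro z
  have hyz : ∑ i, y i * z i = (∑ i, w i * z i) / N := by
    subst hy
    rw [Finset.sum_div]
    exact Finset.sum_congr rfl fun i _ => by ring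
  set S := ∑ i, w i * z i with hSdef
  set T := ∑ i, x i * z i with hTdef
  have hTS : |T - S| ≤ (∑ i, |z i|) / m := by
    have h1 : T - S = ∑ i, (x i - w i) * z i := by
      rw [← Finset.sum_sub_distrib]
      exact Finset.sum_congr rfl fun i _ => by ring
    rw [h1]
    calc |∑ i, (x i - w i) * z i| ≤ ∑ i, |(x i - w i) * z i| :=
          Finset.abs_sum_le_sum_abs _ _
      _ ≤ ∑ i, (1/m) * |z i| := by
          refine Finset.sum_le_sum fun i _ => ?_
          rw [abs_mul]
          refine mul_le_mul_of_nonneg_right ?_ (abs_nonneg _)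
          rw [abs_sub_comm]
          exact (gridw_facts hm x i).2
      _ = (∑ i, |z i|) / m := by rw [← Finset.mul_sum]; ring
  rw [hyz]
  have hSN : N * (S / N) = S := mul_div_cancel₀ S hN0.ne'
  rw [abs_le] at hTS
  constructor
  · intro hu
    have hS0 : 0 ≤ S := by nlinarith
    have h1 : S / N ≤ S := div_le_self hS0 hN1
    constructor
    · linarith [hTS.1]
    · nlinarith [hTS.2]
  · intro hu
    have hS0 : S < 0 := by nlinarith
    constructor
    · nlinarith [hTS.1]
    · have : S ≤ S / N := by nlinarith
      linarith [hTS.2]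
end

section
/- Let T ∈ ℝ^{n₁ × n₂ × ⋯ × n_d}, p ∈ [1, ∞]. Then ‖T‖_p ≤ ‖T‖_{p,*} ≤ ∑_{i₁,…,i_{d−1}} ‖t_{i₁…i_{d−1}}‖_p, where ‖T‖_p is the entrywise ℓ_p-norm of T, t_{i₁…i_{d−1}} ∈ ℝ^{n_d} is the mode-d fiber with the other indices fixed, and ‖T‖_{p,*} is the nuclear p-norm. -/
open scoped ENNReal BigOperators

/-- The nuclear `p`-norm of a tensor: the infimum of `∑ |λ_i|` over rank-one
decompositions `T = ∑ λ_i x_i^1 ⊗ ⋯ ⊗ x_i^d` with unit `ℓ_p`-vectors `x_i^k`. -/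
noncomputable def nucPNorm (p : ℝ≥0∞) {ι : Type*} [Fintype ι] {dims : ι → ℕ}
    (T : (∀ k, Fin (dims k)) → ℝ) : ℝ :=
  sInf { s | ∃ r : ℕ, ∃ lam : Fin r → ℝ, ∃ x : Fin r → ∀ k, Fin (dims k) → ℝ,
    (∀ i k, lpNorm p (x i k) = 1) ∧
    (∀ idx, T idx = ∑ i, lam i * ∏ k, x i k (idx k)) ∧
    s = ∑ i, |lam i| }


section Aux


variable {p : ℝ≥0∞} {ι : Type*} [Fintype ι]

lemma lpNorm_eq_norm [Fact (1 ≤ p)] (x : ι → ℝ) :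
    lpNorm p x = ‖(WithLp.equiv p (ι → ℝ)).symm x‖ := by
  rcases eq_or_ne p ∞ with rfl | h
  · rw [lpNorm, if_pos rfl, PiLp.norm_eq_ciSup]
    simp [Real.norm_eq_abs]
  · have hq : 0 < p.toReal :=
      ENNReal.toReal_pos (zero_lt_one.trans_le (Fact.out : 1 ≤ p)).ne' h
    rw [lpNorm, if_neg h, PiLp.norm_eq_sum hq]
    simp [Real.norm_eq_abs]

lemma lpNorm_nonneg [Fact (1 ≤ p)] (x : ι → ℝ) : 0 ≤ lpNorm p x := by
  rw [lpNorm_eq_norm]; exact norm_nonneg _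

lemma lpNorm_smul [Fact (1 ≤ p)] (c : ℝ) (x : ι → ℝ) :
    lpNorm p (c • x) = |c| * lpNorm p x := by
  rw [lpNorm_eq_norm, lpNorm_eq_norm, WithLp.equiv_symm_apply, WithLp.toLp_smul, norm_smul, Real.norm_eq_abs]

lemma eq_zero_of_lpNorm_eq_zero [Fact (1 ≤ p)] {x : ι → ℝ} (h : lpNorm p x = 0) :
    x = 0 := by
  rw [lpNorm_eq_norm, norm_eq_zero] at h
  have := congrArg (WithLp.equiv p (ι → ℝ)) h
  simpa using this

lemma lpNorm_single [Fact (1 ≤ p)] [DecidableEq ι] (i : ι) :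
    lpNorm p (Pi.single i (1 : ℝ)) = 1 := by
  rw [lpNorm_eq_norm, WithLp.equiv_symm_apply, PiLp.norm_toLp_single]
  simp

set_option maxHeartbeats 1000000 in
lemma lpNorm_rankOne_le [Fact (1 ≤ p)] [DecidableEq ι] {κ : ι → Type*} [∀ i, Fintype (κ i)]
    (x : ∀ i, κ i → ℝ) (hx : ∀ i, lpNorm p (x i) = 1) :
    lpNorm p (fun idx : ∀ i, κ i => ∏ i, x i (idx i)) ≤ 1 := by
  rcases eq_or_ne p ∞ with rfl | h
  · rw [lpNorm, if_pos rfl]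
    refine Real.iSup_le (fun idx => ?_) zero_le_one
    rw [Finset.abs_prod]
    refine Finset.prod_le_one (fun i _ => abs_nonneg _) (fun i _ => ?_)
    have hxi := hx i
    rw [lpNorm, if_pos rfl] at hxi
    calc |x i (idx i)| ≤ ⨆ j, |x i j| :=
          le_ciSup (f := fun j => |x i j|) (Set.Finite.bddAbove (Set.finite_range _)) (idx i)
      _ = 1 := hxi
  · have hq : 0 < p.toReal :=
      ENNReal.toReal_pos (zero_lt_one.trans_le (Fact.out : 1 ≤ p)).ne' h
    rw [lpNorm, if_neg h]
    have hsum : ∀ i, ∑ j, |x i j| ^ p.toReal = 1 := by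
      intro i
      have hxi := hx i
      rw [lpNorm, if_neg h] at hxi
      have hnn : 0 ≤ ∑ j, |x i j| ^ p.toReal :=
        Finset.sum_nonneg fun j _ => Real.rpow_nonneg (abs_nonneg _) _
      calc ∑ j, |x i j| ^ p.toReal
          = ((∑ j, |x i j| ^ p.toReal) ^ (1 / p.toReal)) ^ p.toReal := by
            rw [← Real.rpow_mul hnn, one_div, inv_mul_cancel₀ hq.ne', Real.rpow_one]
        _ = 1 := by rw [hxi, Real.one_rpow]
    have key : ∑ idx : ∀ i, κ i, |∏ i, x i (idx i)| ^ p.toReal = 1 := by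
      have h1 : ∀ idx : ∀ i, κ i,
          |∏ i, x i (idx i)| ^ p.toReal = ∏ i, |x i (idx i)| ^ p.toReal := by
        intro idx
        rw [Finset.abs_prod, Real.finset_prod_rpow _ _ (fun i _ => abs_nonneg _)]
      rw [Finset.sum_congr rfl (fun idx _ => h1 idx)]
      calc ∑ idx : ∀ i, κ i, ∏ i, |x i (idx i)| ^ p.toReal
          = ∏ i, ∑ j, |x i j| ^ p.toReal := (Fintype.prod_sum (fun i j => |x i j| ^ p.toReal)).symm
        _ = 1 := by simp [hsum]
    rw [key, Real.one_rpow]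

lemma lpNorm_le_sum_abs [Fact (1 ≤ p)] [DecidableEq ι] {κ : ι → Type*} [∀ i, Fintype (κ i)]
    (T : (∀ k, κ k) → ℝ) (r : ℕ) (lam : Fin r → ℝ) (x : Fin r → ∀ k, κ k → ℝ)
    (hx : ∀ i k, lpNorm p (x i k) = 1)
    (hT : ∀ idx, T idx = ∑ i, lam i * ∏ k, x i k (idx k)) :
    lpNorm p T ≤ ∑ i, |lam i| := by
  have hTfun : T = ∑ i : Fin r, lam i • (fun idx : ∀ k, κ k => ∏ k, x i k (idx k)) := by
    funext idx
    simp [hT idx]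
  rw [lpNorm_eq_norm, hTfun]
  have hmap : (WithLp.equiv p ((∀ k, κ k) → ℝ)).symm
        (∑ i : Fin r, lam i • (fun idx : ∀ k, κ k => ∏ k, x i k (idx k)))
      = ∑ i : Fin r, lam i •
          (WithLp.equiv p ((∀ k, κ k) → ℝ)).symm (fun idx => ∏ k, x i k (idx k)) := by
    simp only [WithLp.equiv_symm_apply, WithLp.toLp_sum, WithLp.toLp_smul]
  rw [hmap]
  calc ‖∑ i : Fin r, lam i •
          (WithLp.equiv p ((∀ k, κ k) → ℝ)).symm (fun idx => ∏ k, x i k (idx k))‖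
      ≤ ∑ i : Fin r, ‖lam i •
          (WithLp.equiv p ((∀ k, κ k) → ℝ)).symm (fun idx => ∏ k, x i k (idx k))‖ :=
        norm_sum_le _ _
    _ ≤ ∑ i, |lam i| := by
        refine Finset.sum_le_sum fun i _ => ?_
        rw [norm_smul, Real.norm_eq_abs]
        calc |lam i| * ‖(WithLp.equiv p ((∀ k, κ k) → ℝ)).symm
                (fun idx => ∏ k, x i k (idx k))‖
            ≤ |lam i| * 1 := by
              refine mul_le_mul_of_nonneg_left ?_ (abs_nonneg _)
              rw [← lpNorm_eq_norm]
              exact lpNorm_rankOne_le (x i) (hx i)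
          _ = |lam i| := mul_one _

end Aux

/-- For a tensor `T` of order `d+1` and `p ∈ [1,∞]`:
`‖T‖_p ≤ ‖T‖_(p,*) ≤ ∑ ‖t_(i₁…i_d)‖_p`, where `‖T‖_p` is the entrywise `ℓ_p`-norm and
the sum runs over all mode-`(d+1)` fibers of `T`. -/
theorem stmt14 (d : ℕ) (dims : Fin (d + 1) → ℕ) (p : ℝ≥0∞) (hp : 1 ≤ p)
    (T : (∀ k, Fin (dims k)) → ℝ) :
    lpNorm p T ≤ nucPNorm p T ∧
      nucPNorm p T ≤ ∑ i : ∀ k : Fin d, Fin (dims k.castSucc),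
        lpNorm p (fun a : Fin (dims (Fin.last d)) => T (Fin.snoc i a)) := by
  haveI : Fact (1 ≤ p) := ⟨hp⟩
  classical
  set RHS := ∑ i : ∀ k : Fin d, Fin (dims k.castSucc),
      lpNorm p (fun a : Fin (dims (Fin.last d)) => T (Fin.snoc i a)) with hRHS
  obtain ⟨s0, hmem, hle⟩ : ∃ s0,
      (∃ r : ℕ, ∃ lam : Fin r → ℝ, ∃ x : Fin r → ∀ k, Fin (dims k) → ℝ,
        (∀ i k, lpNorm p (x i k) = 1) ∧
        (∀ idx, T idx = ∑ i, lam i * ∏ k, x i k (idx k)) ∧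
        s0 = ∑ i, |lam i|) ∧ s0 ≤ RHS := by
    by_cases hJ : Nonempty (∀ k, Fin (dims k))
    · obtain ⟨idx0⟩ := hJ
      haveI : ∀ k, Nonempty (Fin (dims k)) := fun k => ⟨idx0 k⟩
      let I := ∀ k : Fin d, Fin (dims k.castSucc)
      let e : Fin (Fintype.card I) ≃ I := (Fintype.equivFin I).symm
      let fib : I → Fin (dims (Fin.last d)) → ℝ := fun i a => T (Fin.snoc i a)
      let lam : Fin (Fintype.card I) → ℝ := fun i => lpNorm p (fib (e i))
      let a0 : Fin (dims (Fin.last d)) := Classical.arbitrary _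
      let xl : Fin (Fintype.card I) → Fin (dims (Fin.last d)) → ℝ :=
        fun i => if lam i = 0 then Pi.single a0 1 else (lam i)⁻¹ • fib (e i)
      let x : Fin (Fintype.card I) → ∀ k : Fin (d + 1), Fin (dims k) → ℝ :=
        fun i => Fin.lastCases (motive := fun k => Fin (dims k) → ℝ)
          (xl i) (fun j => Pi.single (e i j) 1)
      have hxcast : ∀ i (j : Fin d), x i j.castSucc = Pi.single (e i j) 1 :=
        fun i j => Fin.lastCases_castSucc j
      have hxlast : ∀ i, x i (Fin.last d) = xl i := fun i => Fin.lastCases_last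
      have hlamnn : ∀ i, 0 ≤ lam i := fun i => lpNorm_nonneg _
      refine ⟨RHS, ⟨Fintype.card I, lam, x, ?_, ?_, ?_⟩, le_refl _⟩
      · intro i k
        induction k using Fin.lastCases with
        | last =>
          rw [hxlast]
          by_cases hl : lam i = 0
          · simp only [xl, if_pos hl]
            exact lpNorm_single _
          · simp only [xl, if_neg hl]
            rw [lpNorm_smul, abs_inv, abs_of_nonneg (hlamnn i)]
            exact inv_mul_cancel₀ hl
        | cast j =>
          rw [hxcast]
          exact lpNorm_single _
      · intro idx
        have hside : ∀ i, i ≠ e.symm (Fin.init idx) →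
            lam i * ∏ k, x i k (idx k) = 0 := by
          intro i hi
          have hne : e i ≠ Fin.init idx := by
            intro h
            exact hi (by rw [← h, Equiv.symm_apply_apply])
          obtain ⟨j, hj⟩ := Function.ne_iff.mp hne
          have hzero : x i j.castSucc (idx j.castSucc) = 0 := by
            rw [hxcast]
            exact Pi.single_eq_of_ne (Ne.symm hj) 1
          rw [Finset.prod_eq_zero (Finset.mem_univ j.castSucc) hzero, mul_zero]
        rw [Fintype.sum_eq_single (e.symm (Fin.init idx)) hside]
        set i0 := e.symm (Fin.init idx) with hi0
        have he : e i0 = Fin.init idx := e.apply_symm_apply _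
        have hprod : ∏ k, x i0 k (idx k) = xl i0 (idx (Fin.last d)) := by
          rw [Fin.prod_univ_castSucc, hxlast]
          have h1 : ∀ j : Fin d, x i0 j.castSucc (idx j.castSucc) = 1 := by
            intro j
            rw [hxcast, he]
            exact Pi.single_eq_same _ _
          rw [Finset.prod_eq_one (fun j _ => h1 j), one_mul]
        rw [hprod]
        have hTfib : T idx = fib (e i0) (idx (Fin.last d)) := by
          rw [he]
          show T idx = T (Fin.snoc (Fin.init idx) (idx (Fin.last d)))
          rw [Fin.snoc_init_self]
        by_cases hl : lam i0 = 0
        · have hfib : fib (e i0) = 0 := eq_zero_of_lpNorm_eq_zero hl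
          rw [hTfib, hfib, hl, zero_mul]
          rfl
        · simp only [xl, if_neg hl, Pi.smul_apply, smul_eq_mul]
          rw [← mul_assoc, mul_inv_cancel₀ hl, one_mul]
          exact hTfib
      · calc RHS = ∑ i : I, lpNorm p (fib i) := rfl
          _ = ∑ i : Fin (Fintype.card I), lpNorm p (fib (e i)) :=
              (Equiv.sum_comp e fun i => lpNorm p (fib i)).symm
          _ = ∑ i, |lam i| := by
              refine Finset.sum_congr rfl fun i _ => ?_
              rw [abs_of_nonneg (hlamnn i)]
    · refine ⟨0, ⟨0, Fin.elim0, Fin.elim0, fun i => i.elim0,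
        fun idx => absurd ⟨idx⟩ hJ, by simp⟩, ?_⟩
      exact Finset.sum_nonneg fun i _ => lpNorm_nonneg _
  have hbdd : BddBelow { s | ∃ r : ℕ, ∃ lam : Fin r → ℝ,
      ∃ x : Fin r → ∀ k, Fin (dims k) → ℝ,
      (∀ i k, lpNorm p (x i k) = 1) ∧
      (∀ idx, T idx = ∑ i, lam i * ∏ k, x i k (idx k)) ∧
      s = ∑ i, |lam i| } := by
    refine ⟨0, fun s hs => ?_⟩
    obtain ⟨r, lam, x, -, -, rfl⟩ := hs
    exact Finset.sum_nonneg fun i _ => abs_nonneg _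
  constructor
  · refine le_csInf ⟨s0, hmem⟩ ?_
    rintro b ⟨r, lam, x, hx, hT, rfl⟩
    exact lpNorm_le_sum_abs T r lam x hx hT
  · exact le_trans (csInf_le hbdd hmem) hle
end

section
/- For n, d ∈ ℕ and p ∈ [2, ∞], the spectral p-norm of the order-d identity tensor ∑_{i=1}^n e_i^{⊗d} equals 1 if p ≤ d, and equals n^{1−d/p} if p > d. -/
open scoped ENNReal BigOperators

/-- The spectral `p`-norm of a tensor `T ∈ ℝ^(dims k₁ × ⋯ × dims k_d)`:
the supremum of `⟨T, x₁ ⊗ ⋯ ⊗ x_d⟩` over unit `ℓ_p`-vectors `x_k`. -/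
noncomputable def specPNorm (p : ℝ≥0∞) {ι : Type*} [Fintype ι] [DecidableEq ι] {dims : ι → ℕ}
    (T : (∀ k, Fin (dims k)) → ℝ) : ℝ :=
  sSup { r | ∃ x : ∀ k, Fin (dims k) → ℝ,
    (∀ k, lpNorm p (x k) = 1) ∧ r = ∑ i, T i * ∏ k, x k (i k) }

set_option maxHeartbeats 1000000 in
/-- Evaluation of the identity tensor against a rank-one tensor. -/
lemma eval_id (n d : ℕ) (x : Fin d → Fin n → ℝ) :
    ∑ i : Fin d → Fin n,
      (∑ j : Fin n, ∏ k : Fin d, (if i k = j then (1:ℝ) else 0)) * ∏ k : Fin d, x k (i k)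
      = ∑ j : Fin n, ∏ k : Fin d, x k j := by
  have h1 : ∀ i : Fin d → Fin n,
      (∑ j : Fin n, ∏ k : Fin d, (if i k = j then (1:ℝ) else 0)) * ∏ k, x k (i k)
      = ∑ j : Fin n, ∏ k : Fin d, (if i k = j then x k (i k) else 0) := by
    intro i
    rw [Finset.sum_mul]
    refine Finset.sum_congr rfl fun j _ => ?_
    rw [← Finset.prod_mul_distrib]
    refine Finset.prod_congr rfl fun k _ => ?_
    by_cases h : i k = j <;> simp [h]
  simp_rw [h1]
  rw [Finset.sum_comm]
  refine Finset.sum_congr rfl fun j _ => ?_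
  calc ∑ i : Fin d → Fin n, ∏ k : Fin d, (if i k = j then x k (i k) else 0)
      = ∑ i : Fin d → Fin n, ∏ k : Fin d,
          (fun (k : Fin d) (m : Fin n) => if m = j then x k m else 0) k (i k) := rfl
    _ = ∏ k : Fin d, ∑ m : Fin n, (if m = j then x k m else 0) :=
        (Fintype.prod_sum (fun (k : Fin d) (m : Fin n) => if m = j then x k m else 0)).symm
    _ = ∏ k : Fin d, x k j := by
        refine Finset.prod_congr rfl fun k _ => ?_
        simp

/-- AM-GM step: the inner product is at most the average of the `d`-th power sums. -/
lemma amgm_step (n d : ℕ) (hd : 0 < d) (x : Fin d → Fin n → ℝ) :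
    ∑ j : Fin n, ∏ k : Fin d, x k j
      ≤ (1 / (d:ℝ)) * ∑ k : Fin d, ∑ j : Fin n, |x k j| ^ (d:ℝ) := by
  have hd' : (d:ℝ) ≠ 0 := Nat.cast_ne_zero.mpr hd.ne'
  have step1 : ∀ j : Fin n, ∏ k : Fin d, x k j ≤ ∑ k : Fin d, (1/(d:ℝ)) * |x k j| ^ (d:ℝ) := by
    intro j
    have h0 : ∏ k : Fin d, x k j ≤ ∏ k : Fin d, |x k j| :=
      (le_abs_self _).trans_eq (Finset.abs_prod _ _)
    have h1 := Real.geom_mean_le_arith_mean_weighted Finset.univ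
      (fun _ : Fin d => 1/(d:ℝ)) (fun k => |x k j| ^ (d:ℝ))
      (fun i _ => by positivity)
      (by simp [Finset.sum_const, hd'])
      (fun i _ => by positivity)
    have h2 : ∀ k : Fin d, (|x k j| ^ (d:ℝ)) ^ (1/(d:ℝ)) = |x k j| := by
      intro k
      rw [← Real.rpow_mul (abs_nonneg _), mul_one_div_cancel hd', Real.rpow_one]
    calc ∏ k : Fin d, x k j ≤ ∏ k : Fin d, |x k j| := h0
      _ = ∏ k : Fin d, (|x k j| ^ (d:ℝ)) ^ (1/(d:ℝ)) := by
          exact Finset.prod_congr rfl fun k _ => (h2 k).symm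
      _ ≤ ∑ k : Fin d, (1/(d:ℝ)) * |x k j| ^ (d:ℝ) := h1
  calc ∑ j : Fin n, ∏ k : Fin d, x k j
      ≤ ∑ j : Fin n, ∑ k : Fin d, (1/(d:ℝ)) * |x k j| ^ (d:ℝ) :=
        Finset.sum_le_sum fun j _ => step1 j
    _ = (1/(d:ℝ)) * ∑ k : Fin d, ∑ j : Fin n, |x k j| ^ (d:ℝ) := by
        rw [Finset.sum_comm, Finset.mul_sum]
        exact Finset.sum_congr rfl fun k _ => (Finset.mul_sum _ _ _).symm

/-- Upper bound in the case `p ≤ d`. -/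
lemma ub1 (n d : ℕ) (hd : 0 < d) (t : ℝ) (ht2 : 2 ≤ t) (htd : t ≤ (d:ℝ))
    (x : Fin d → Fin n → ℝ) (hx : ∀ k, ∑ j, |x k j| ^ t = 1) :
    ∑ j : Fin n, ∏ k : Fin d, x k j ≤ 1 := by
  have ht0 : 0 < t := by linarith
  have hd' : (d:ℝ) ≠ 0 := Nat.cast_ne_zero.mpr hd.ne'
  have hcoord : ∀ k j, |x k j| ≤ 1 := by
    intro k j
    have h1 : |x k j| ^ t ≤ 1 := by
      rw [← hx k]
      exact Finset.single_le_sum (f := fun i => |x k i| ^ t)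
        (fun i _ => by positivity) (Finset.mem_univ j)
    calc |x k j| = (|x k j| ^ t) ^ (1/t) := by
          rw [← Real.rpow_mul (abs_nonneg _), mul_one_div_cancel ht0.ne', Real.rpow_one]
      _ ≤ 1 ^ (1/t) := Real.rpow_le_rpow (by positivity) h1 (by positivity)
      _ = 1 := Real.one_rpow _
  have hmono : ∀ k j, |x k j| ^ (d:ℝ) ≤ |x k j| ^ t := by
    intro k j
    rcases eq_or_lt_of_le (abs_nonneg (x k j)) with h | h
    · rw [← h, Real.zero_rpow hd', Real.zero_rpow ht0.ne']
    · exact Real.rpow_le_rpow_of_exponent_ge h (hcoord k j) htd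
  calc ∑ j : Fin n, ∏ k : Fin d, x k j
      ≤ (1/(d:ℝ)) * ∑ k : Fin d, ∑ j : Fin n, |x k j| ^ (d:ℝ) := amgm_step n d hd x
    _ ≤ (1/(d:ℝ)) * ∑ k : Fin d, ∑ j : Fin n, |x k j| ^ t := by
        refine mul_le_mul_of_nonneg_left ?_ (by positivity)
        exact Finset.sum_le_sum fun k _ => Finset.sum_le_sum fun j _ => hmono k j
    _ = 1 := by
        simp only [hx]
        simp [hd']

/-- Upper bound in the case `d < p < ∞`. -/
lemma ub2 (n d : ℕ) (hn : 0 < n) (hd : 0 < d) (t : ℝ) (htd : (d:ℝ) < t)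
    (x : Fin d → Fin n → ℝ) (hx : ∀ k, ∑ j, |x k j| ^ t = 1) :
    ∑ j : Fin n, ∏ k : Fin d, x k j ≤ (n:ℝ) ^ (1 - (d:ℝ)/t) := by
  have hd0 : (0:ℝ) < d := Nat.cast_pos.mpr hd
  have hn0 : (0:ℝ) < n := Nat.cast_pos.mpr hn
  have ht0 : 0 < t := lt_trans hd0 htd
  have hq1 : 1 ≤ t / (d:ℝ) := (one_le_div hd0).mpr htd.le
  have key : ∀ k : Fin d, ∑ j : Fin n, |x k j| ^ (d:ℝ) ≤ (n:ℝ) ^ (1 - (d:ℝ)/t) := by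
    intro k
    have h1 := Real.arith_mean_le_rpow_mean Finset.univ (fun _ : Fin n => 1/(n:ℝ))
      (fun j => |x k j| ^ (d:ℝ)) (fun i _ => by positivity)
      (by simp [Finset.sum_const, hn0.ne']) (fun i _ => by positivity) hq1
    have h2 : ∀ j : Fin n, (|x k j| ^ (d:ℝ)) ^ (t/(d:ℝ)) = |x k j| ^ t := by
      intro j
      rw [← Real.rpow_mul (abs_nonneg _), mul_div_cancel₀ _ hd0.ne']
    rw [← Finset.mul_sum] at h1
    have h3 : (∑ j : Fin n, (1/(n:ℝ)) * (|x k j| ^ (d:ℝ)) ^ (t/(d:ℝ))) = 1/(n:ℝ) := by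
      rw [← Finset.mul_sum]
      simp_rw [h2]
      rw [hx k, mul_one]
    rw [h3] at h1
    have h4 : (1/(n:ℝ)) * ∑ j : Fin n, |x k j| ^ (d:ℝ)
        ≤ ((1:ℝ)/(n:ℝ)) ^ ((d:ℝ)/t) := by
      calc (1/(n:ℝ)) * ∑ j : Fin n, |x k j| ^ (d:ℝ)
          ≤ ((1:ℝ)/(n:ℝ)) ^ (1/(t/(d:ℝ))) := h1
        _ = ((1:ℝ)/(n:ℝ)) ^ ((d:ℝ)/t) := by rw [one_div_div]
    calc ∑ j : Fin n, |x k j| ^ (d:ℝ)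
        = (n:ℝ) * ((1/(n:ℝ)) * ∑ j : Fin n, |x k j| ^ (d:ℝ)) := by
          field_simp
      _ ≤ (n:ℝ) * ((1:ℝ)/(n:ℝ)) ^ ((d:ℝ)/t) := by
          exact mul_le_mul_of_nonneg_left h4 hn0.le
      _ = (n:ℝ) ^ (1 - (d:ℝ)/t) := by
          rw [Real.rpow_sub hn0, Real.rpow_one, one_div, Real.inv_rpow hn0.le,
            div_eq_mul_inv, ← div_eq_mul_inv]
  calc ∑ j : Fin n, ∏ k : Fin d, x k j
      ≤ (1/(d:ℝ)) * ∑ k : Fin d, ∑ j : Fin n, |x k j| ^ (d:ℝ) := amgm_step n d hd x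
    _ ≤ (1/(d:ℝ)) * ∑ k : Fin d, (n:ℝ) ^ (1 - (d:ℝ)/t) := by
        refine mul_le_mul_of_nonneg_left (Finset.sum_le_sum fun k _ => key k) (by positivity)
      _ = (n:ℝ) ^ (1 - (d:ℝ)/t) := by
        rw [Finset.sum_const, Finset.card_univ, Fintype.card_fin, nsmul_eq_mul]
        field_simp

lemma sum_eq_one_of_lpNorm {n : ℕ} {p : ℝ≥0∞} (hp : p ≠ ∞) (ht : 0 < p.toReal)
    {x : Fin n → ℝ} (h : lpNorm p x = 1) : ∑ i, |x i| ^ p.toReal = 1 := by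
  rw [lpNorm, if_neg hp] at h
  have hS : (0:ℝ) ≤ ∑ i, |x i| ^ p.toReal :=
    Finset.sum_nonneg fun i _ => by positivity
  calc ∑ i, |x i| ^ p.toReal
      = ((∑ i, |x i| ^ p.toReal) ^ (1/p.toReal)) ^ p.toReal := by
        rw [← Real.rpow_mul hS, one_div_mul_cancel ht.ne', Real.rpow_one]
    _ = 1 := by rw [h, Real.one_rpow]

lemma norm_e0_fin (n : ℕ) (hn : 0 < n) (p : ℝ≥0∞) (hp : p ≠ ∞) (ht : 0 < p.toReal) :
    lpNorm p (fun i : Fin n => if i = ⟨0, hn⟩ then (1:ℝ) else 0) = 1 := by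
  rw [lpNorm, if_neg hp]
  have h : ∑ i : Fin n, |if i = ⟨0, hn⟩ then (1:ℝ) else 0| ^ p.toReal = 1 := by
    have : ∀ i : Fin n, |if i = ⟨0, hn⟩ then (1:ℝ) else 0| ^ p.toReal
        = if i = ⟨0, hn⟩ then (1:ℝ) else 0 := by
      intro i
      by_cases h : i = ⟨0, hn⟩ <;> simp [h, Real.zero_rpow ht.ne']
    simp_rw [this]
    simp
  rw [h, Real.one_rpow]

lemma norm_e0_inf (n : ℕ) (hn : 0 < n) :
    lpNorm ∞ (fun i : Fin n => if i = ⟨0, hn⟩ then (1:ℝ) else 0) = 1 := by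
  rw [lpNorm, if_pos rfl]
  haveI : Nonempty (Fin n) := ⟨⟨0, hn⟩⟩
  apply le_antisymm
  · apply ciSup_le
    intro i
    by_cases h : i = ⟨0, hn⟩ <;> simp [h]
  · simpa using le_ciSup (f := fun i : Fin n => |if i = ⟨0, hn⟩ then (1:ℝ) else 0|)
      (Finite.bddAbove_range _) (⟨0, hn⟩ : Fin n)

lemma val_e0 (n d : ℕ) (hn : 0 < n) (hd : 0 < d) :
    ∑ j : Fin n, ∏ _k : Fin d, (if j = ⟨0, hn⟩ then (1:ℝ) else 0) = 1 := by
  have : ∀ j : Fin n, ∏ _k : Fin d, (if j = ⟨0, hn⟩ then (1:ℝ) else 0)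
      = if j = ⟨0, hn⟩ then (1:ℝ) else 0 := by
    intro j
    by_cases h : j = ⟨0, hn⟩ <;> simp [h, Finset.prod_const, zero_pow hd.ne']
  simp_rw [this]
  simp

lemma norm_unif_fin (n : ℕ) (hn : 0 < n) (p : ℝ≥0∞) (hp : p ≠ ∞) (ht : 0 < p.toReal) :
    lpNorm p (fun _ : Fin n => (n:ℝ) ^ (-(1/p.toReal))) = 1 := by
  have hn0 : (0:ℝ) < n := Nat.cast_pos.mpr hn
  set t := p.toReal
  rw [lpNorm, if_neg hp]
  have hc : |(n:ℝ) ^ (-(1/t))| = (n:ℝ) ^ (-(1/t)) := abs_of_pos (Real.rpow_pos_of_pos hn0 _)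
  have h : ∑ _i : Fin n, |(n:ℝ) ^ (-(1/t))| ^ t = 1 := by
    rw [Finset.sum_const, Finset.card_univ, Fintype.card_fin, nsmul_eq_mul, hc,
      ← Real.rpow_mul hn0.le]
    rw [show -(1/t) * t = -1 by field_simp]
    rw [Real.rpow_neg_one]
    field_simp
  rw [h, Real.one_rpow]

lemma val_unif (n d : ℕ) (hn : 0 < n) (t : ℝ) (ht : 0 < t) :
    ∑ _j : Fin n, ∏ _k : Fin d, (n:ℝ) ^ (-(1/t)) = (n:ℝ) ^ (1 - (d:ℝ)/t) := by
  have hn0 : (0:ℝ) < n := Nat.cast_pos.mpr hn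
  rw [Finset.sum_const, Finset.card_univ, Fintype.card_fin, nsmul_eq_mul,
    Finset.prod_const, Finset.card_univ, Fintype.card_fin,
    ← Real.rpow_natCast ((n:ℝ) ^ (-(1/t))) d, ← Real.rpow_mul hn0.le]
  rw [show -(1/t) * (d:ℝ) = -(((d:ℝ))/t) by ring]
  rw [Real.rpow_sub hn0, Real.rpow_one, Real.rpow_neg hn0.le,
    div_eq_mul_inv, ← div_eq_mul_inv]

lemma norm_ones_inf (n : ℕ) (hn : 0 < n) :
    lpNorm ∞ (fun _ : Fin n => (1:ℝ)) = 1 := by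
  haveI : Nonempty (Fin n) := ⟨⟨0, hn⟩⟩
  rw [lpNorm, if_pos rfl]
  simp

lemma ub_inf (n d : ℕ) (x : Fin d → Fin n → ℝ)
    (hx : ∀ k, lpNorm ∞ (x k) = 1) :
    ∑ j : Fin n, ∏ k : Fin d, x k j ≤ (n:ℝ) := by
  have hcoord : ∀ k j, |x k j| ≤ 1 := by
    intro k j
    have h := hx k
    rw [lpNorm, if_pos rfl] at h
    calc |x k j| ≤ ⨆ i, |x k i| :=
          le_ciSup (f := fun i => |x k i|) (Finite.bddAbove_range _) j
      _ = 1 := h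
  calc ∑ j : Fin n, ∏ k : Fin d, x k j
      ≤ ∑ j : Fin n, (1:ℝ) := by
        refine Finset.sum_le_sum fun j _ => ?_
        calc ∏ k : Fin d, x k j ≤ ∏ k : Fin d, |x k j| :=
              (le_abs_self _).trans_eq (Finset.abs_prod _ _)
          _ ≤ 1 := Finset.prod_le_one (fun k _ => abs_nonneg _) (fun k _ => hcoord k j)
    _ = n := by simp

set_option maxHeartbeats 1600000 in
/-- For `n, d ≥ 1` and `p ∈ [2,∞]`, the spectral `p`-norm of the order-`d` identity
tensor `∑_(j=1)^n e_j^(⊗d)` equals `1` if `p ≤ d` and `n^(1 - d/p)` if `p > d`. -/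
theorem stmt15 (n d : ℕ) (hn : 0 < n) (hd : 0 < d) (p : ℝ≥0∞) (hp : 2 ≤ p) :
    (p ≤ (d : ℝ≥0∞) →
      specPNorm p (dims := fun _ : Fin d => n)
        (fun idx => ∑ j : Fin n, ∏ k : Fin d, (if idx k = j then (1 : ℝ) else 0)) = 1) ∧
    ((d : ℝ≥0∞) < p →
      specPNorm p (dims := fun _ : Fin d => n)
        (fun idx => ∑ j : Fin n, ∏ k : Fin d, (if idx k = j then (1 : ℝ) else 0)) =
        (n : ℝ) ^ (1 - (d : ℝ) / p.toReal)) := by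
  haveI : Nonempty (Fin n) := ⟨⟨0, hn⟩⟩
  constructor
  · intro hpd
    have hptop : p ≠ ∞ := ne_top_of_le_ne_top (ENNReal.natCast_ne_top d) hpd
    have ht2 : 2 ≤ p.toReal := by
      have h := ENNReal.toReal_mono (ENNReal.natCast_ne_top d) (hp.trans hpd)
      calc (2:ℝ) = ((2:ℝ≥0∞)).toReal := by simp
        _ ≤ p.toReal := by
          refine ENNReal.toReal_mono hptop hp
    have htd : p.toReal ≤ (d:ℝ) := by
      have h := ENNReal.toReal_mono (ENNReal.natCast_ne_top d) hpd
      simpa using h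
    have ht0 : 0 < p.toReal := by linarith
    have hmem : ∃ x : ∀ _k : Fin d, Fin n → ℝ, (∀ k, lpNorm p (x k) = 1) ∧
        (1:ℝ) = ∑ i : Fin d → Fin n,
          (∑ j : Fin n, ∏ k : Fin d, (if i k = j then (1:ℝ) else 0)) * ∏ k, x k (i k) := by
      refine ⟨fun _ => fun i => if i = ⟨0, hn⟩ then 1 else 0,
        fun k => norm_e0_fin n hn p hptop ht0, ?_⟩
      exact ((eval_id n d _).trans (val_e0 n d hn hd)).symm
    have hub : ∀ r ∈ {r : ℝ | ∃ x : ∀ _k : Fin d, Fin n → ℝ, (∀ k, lpNorm p (x k) = 1) ∧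
        r = ∑ i : Fin d → Fin n,
          (∑ j : Fin n, ∏ k : Fin d, (if i k = j then (1:ℝ) else 0)) * ∏ k, x k (i k)},
        r ≤ 1 := by
      rintro r ⟨x, hxn, rfl⟩
      exact le_of_eq_of_le (eval_id n d x)
        (ub1 n d hd p.toReal ht2 htd x fun k => sum_eq_one_of_lpNorm hptop ht0 (hxn k))
    exact le_antisymm (csSup_le ⟨1, hmem⟩ hub) (le_csSup ⟨1, hub⟩ hmem)
  · intro hdp
    rcases eq_or_ne p ∞ with hptop | hptop
    · subst hptop
      have hgoal : (n:ℝ) ^ (1 - (d:ℝ) / (∞:ℝ≥0∞).toReal) = (n:ℝ) := by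
        rw [ENNReal.toReal_top, div_zero, sub_zero, Real.rpow_one]
      rw [hgoal]
      have hmem : ∃ x : ∀ _k : Fin d, Fin n → ℝ, (∀ k, lpNorm ∞ (x k) = 1) ∧
          ((n:ℝ)) = ∑ i : Fin d → Fin n,
            (∑ j : Fin n, ∏ k : Fin d, (if i k = j then (1:ℝ) else 0)) * ∏ k, x k (i k) := by
        refine ⟨fun _ => fun _ => 1, fun k => norm_ones_inf n hn, ?_⟩
        exact ((eval_id n d (fun _ _ => (1:ℝ))).trans (by simp)).symm
      have hub : ∀ r ∈ {r : ℝ | ∃ x : ∀ _k : Fin d, Fin n → ℝ, (∀ k, lpNorm ∞ (x k) = 1) ∧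
          r = ∑ i : Fin d → Fin n,
            (∑ j : Fin n, ∏ k : Fin d, (if i k = j then (1:ℝ) else 0)) * ∏ k, x k (i k)},
          r ≤ (n:ℝ) := by
        rintro r ⟨x, hxn, rfl⟩
        exact le_of_eq_of_le (eval_id n d x) (ub_inf n d x hxn)
      exact le_antisymm (csSup_le ⟨(n:ℝ), hmem⟩ hub) (le_csSup ⟨(n:ℝ), hub⟩ hmem)
    · have htd : (d:ℝ) < p.toReal := by
        have h := ENNReal.toReal_strict_mono hptop hdp
        simpa using h
      have ht0 : 0 < p.toReal := lt_of_le_of_lt (Nat.cast_nonneg d) htd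
      have hmem : ∃ x : ∀ _k : Fin d, Fin n → ℝ, (∀ k, lpNorm p (x k) = 1) ∧
          ((n:ℝ) ^ (1 - (d:ℝ) / p.toReal)) = ∑ i : Fin d → Fin n,
            (∑ j : Fin n, ∏ k : Fin d, (if i k = j then (1:ℝ) else 0)) * ∏ k, x k (i k) := by
        refine ⟨fun _ => fun _ => (n:ℝ) ^ (-(1/p.toReal)),
          fun k => norm_unif_fin n hn p hptop ht0, ?_⟩
        exact ((eval_id n d _).trans (val_unif n d hn p.toReal ht0)).symm
      have hub : ∀ r ∈ {r : ℝ | ∃ x : ∀ _k : Fin d, Fin n → ℝ, (∀ k, lpNorm p (x k) = 1) ∧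
          r = ∑ i : Fin d → Fin n,
            (∑ j : Fin n, ∏ k : Fin d, (if i k = j then (1:ℝ) else 0)) * ∏ k, x k (i k)},
          r ≤ (n:ℝ) ^ (1 - (d:ℝ) / p.toReal) := by
        rintro r ⟨x, hxn, rfl⟩
        exact le_of_eq_of_le (eval_id n d x)
          (ub2 n d hn hd p.toReal htd x fun k => sum_eq_one_of_lpNorm hptop ht0 (hxn k))
      exact le_antisymm (csSup_le ⟨_, hmem⟩ hub) (le_csSup ⟨_, hub⟩ hmem)
end

section
/- Let n, d, r ∈ ℕ with p = d ≥ 2. Suppose λ_i ≥ 0 and x_i ∈ ℝ^n with x_i ≥ 0 entrywise and ‖x_i‖_p = 1 for i = 1,…,r. Then the nuclear p-norm of T = ∑_{i=1}^r λ_i x_i^{⊗d} equals ∑_{i=1}^r λ_i. -/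
open scoped ENNReal BigOperators

/-- A unit `ℓ_d` vector has `∑ |y j|^d = 1` (natural power). -/
lemma lpNorm_unit_sum {n d : ℕ} (hd : 2 ≤ d) (y : Fin n → ℝ)
    (h : lpNorm (d : ℝ≥0∞) y = 1) : ∑ j, |y j| ^ d = 1 := by
  have hd0 : (d : ℝ) ≠ 0 := by positivity
  have hne : (d : ℝ≥0∞) ≠ ∞ := ENNReal.natCast_ne_top d
  rw [lpNorm, if_neg hne] at h
  have htr : ((d : ℝ≥0∞)).toReal = (d : ℝ) := by simp
  rw [htr] at h
  have hS : 0 ≤ ∑ j, |y j| ^ (d : ℝ) :=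
    Finset.sum_nonneg fun j _ => Real.rpow_nonneg (abs_nonneg _) _
  have : ∑ j, |y j| ^ (d : ℝ) = 1 := by
    have := congrArg (fun t : ℝ => t ^ (d : ℝ)) h
    simp only [Real.one_rpow] at this
    rwa [← Real.rpow_mul hS, one_div, inv_mul_cancel₀ hd0, Real.rpow_one] at this
  calc ∑ j, |y j| ^ d = ∑ j, |y j| ^ (d : ℝ) := by
        refine Finset.sum_congr rfl fun j _ => ?_
        rw [Real.rpow_natCast]
    _ = 1 := this

/-- Generalized Hölder / AM-GM: if each `y k` has `∑ |y k j|^d = 1` then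
`∑ j, ∏ k, |y k j| ≤ 1`. -/
lemma amgm_bound {n d : ℕ} (hd : 2 ≤ d) (y : Fin d → Fin n → ℝ)
    (h : ∀ k, ∑ j, |y k j| ^ d = 1) : ∑ j, ∏ k, |y k j| ≤ 1 := by
  have hd0 : (d : ℝ) ≠ 0 := by positivity
  have step : ∀ j, ∏ k, |y k j| ≤ ∑ k : Fin d, (1 / d) * (|y k j| ^ d) := by
    intro j
    have := Real.geom_mean_le_arith_mean_weighted Finset.univ
      (fun _ : Fin d => 1 / (d : ℝ)) (fun k => |y k j| ^ d)
      (fun _ _ => by positivity)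
      (by simp [Finset.card_univ]; field_simp)
      (fun k _ => by positivity)
    calc ∏ k, |y k j| = ∏ k, (|y k j| ^ d) ^ (1 / (d : ℝ)) := by
          refine Finset.prod_congr rfl fun k _ => ?_
          rw [← Real.rpow_natCast |y k j| d, ← Real.rpow_mul (abs_nonneg _),
            mul_one_div, div_self hd0, Real.rpow_one]
      _ ≤ _ := this
  calc ∑ j, ∏ k, |y k j| ≤ ∑ j, ∑ k : Fin d, (1 / d) * (|y k j| ^ d) :=
        Finset.sum_le_sum fun j _ => step j
    _ = ∑ k : Fin d, (1 / d) * ∑ j, |y k j| ^ d := by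
        rw [Finset.sum_comm]; simp [Finset.mul_sum]
    _ = 1 := by simp [h]; field_simp

/-- For `p = d ≥ 2`, nonnegative weights `λ_i` and entrywise nonnegative unit
`ℓ_p`-vectors `x_i`, the nuclear `p`-norm of `T = ∑ λ_i x_i^(⊗d)` equals `∑ λ_i`. -/
theorem stmt16 (n d r : ℕ) (hd : 2 ≤ d) (lam : Fin r → ℝ) (x : Fin r → Fin n → ℝ)
    (hlam : ∀ i, 0 ≤ lam i) (hx : ∀ i j, 0 ≤ x i j)
    (hxn : ∀ i, lpNorm (d : ℝ≥0∞) (x i) = 1) :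
    nucPNorm (d : ℝ≥0∞) (dims := fun _ : Fin d => n)
      (fun idx => ∑ i, lam i * ∏ k : Fin d, x i (idx k)) = ∑ i, lam i := by
  set T : (∀ _ : Fin d, Fin n) → ℝ :=
    fun idx => ∑ i, lam i * ∏ k : Fin d, x i (idx k) with hT
  -- the trace sum: ∑_j T (j,...,j) = ∑ i, lam i
  have htrace : ∑ j : Fin n, T (fun _ => j) = ∑ i, lam i := by
    rw [hT]
    rw [Finset.sum_comm]
    refine Finset.sum_congr rfl fun i _ => ?_
    have h1 : ∑ j : Fin n, lam i * ∏ _k : Fin d, x i j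
        = lam i * ∑ j : Fin n, (x i j) ^ d := by
      rw [Finset.mul_sum]
      refine Finset.sum_congr rfl fun j _ => ?_
      simp [Finset.prod_const, Finset.card_univ]
    rw [h1]
    have h2 : ∑ j : Fin n, (x i j) ^ d = 1 := by
      have := lpNorm_unit_sum hd (x i) (hxn i)
      rwa [Finset.sum_congr rfl fun j _ => by rw [abs_of_nonneg (hx i j)]] at this
    rw [h2, mul_one]
  apply le_antisymm
  · -- upper bound: the given decomposition is in the set
    apply csInf_le
    · refine ⟨0, ?_⟩
      rintro s ⟨r', lam', x', _, _, rfl⟩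
      exact Finset.sum_nonneg fun i _ => abs_nonneg _
    · exact ⟨r, lam, fun i _ => x i, fun i k => hxn i, fun idx => rfl,
        (Finset.sum_congr rfl fun i _ => (abs_of_nonneg (hlam i)).symm)⟩
  · -- lower bound
    refine le_csInf ⟨∑ i, lam i, r, lam, fun i _ => x i, fun i k => hxn i,
      fun idx => rfl, (Finset.sum_congr rfl fun i _ => (abs_of_nonneg (hlam i)).symm)⟩ ?_
    rintro s ⟨r', lam', x', hnorm, heq, rfl⟩
    have key : ∑ i, lam i ≤ ∑ i, |lam' i| := by
      rw [← htrace]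
      have : ∑ j : Fin n, T (fun _ => j)
          = ∑ i : Fin r', lam' i * ∑ j : Fin n, ∏ k : Fin d, x' i k j := by
        calc ∑ j : Fin n, T (fun _ => j)
            = ∑ j : Fin n, ∑ i : Fin r', lam' i * ∏ k : Fin d, x' i k j := by
              exact Finset.sum_congr rfl fun j _ => heq (fun _ => j)
          _ = _ := by rw [Finset.sum_comm]; simp [Finset.mul_sum]
      rw [this]
      have hbound : ∀ i : Fin r', lam' i * ∑ j : Fin n, ∏ k : Fin d, x' i k j ≤ |lam' i| := by
        intro i
        have h1 : |∑ j : Fin n, ∏ k : Fin d, x' i k j| ≤ 1 := by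
          calc |∑ j : Fin n, ∏ k : Fin d, x' i k j|
              ≤ ∑ j : Fin n, |∏ k : Fin d, x' i k j| := Finset.abs_sum_le_sum_abs _ _
            _ = ∑ j : Fin n, ∏ k : Fin d, |x' i k j| := by
                refine Finset.sum_congr rfl fun j _ => Finset.abs_prod _ _
            _ ≤ 1 := amgm_bound hd (fun k => x' i k)
                (fun k => lpNorm_unit_sum hd (x' i k) (hnorm i k))
        calc lam' i * ∑ j : Fin n, ∏ k : Fin d, x' i k j
            ≤ |lam' i * ∑ j : Fin n, ∏ k : Fin d, x' i k j| := le_abs_self _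
          _ = |lam' i| * |∑ j : Fin n, ∏ k : Fin d, x' i k j| := abs_mul _ _
          _ ≤ |lam' i| * 1 := by
              exact mul_le_mul_of_nonneg_left h1 (abs_nonneg _)
          _ = |lam' i| := mul_one _
      exact Finset.sum_le_sum fun i _ => hbound i
    exact key
end

section
/- Let p ∈ (1, ∞), q its conjugate, α ≥ 1, β ≥ α+1, and x ∈ S_q^n. With the sets D_j(x) (j = 0,1,…,m) defined by the dyadic-like thresholds (β^{j−1}/(αn))^{1/q}, define z ∈ ℝ^n by z_i = sign(x_i) for i ∈ D_0(x) ∪ D_1(x) and z_i = sign(x_i)·β^{(j−1)/p} for i ∈ D_j(x), j ≥ 2. Then ‖z‖_p^p ≤ (α+1)n and zᵀx ≥ (αn/β)^{1/p} (1 − 1/α); consequently xᵀ(z/‖z‖_p) ≥ (α/(β(α+1)))^{1/p} (1 − 1/α). -/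
open scoped BigOperators

set_option maxHeartbeats 1000000 in
/-- For `x ∈ S_q^n`, with the sets `D_j(x)` defined by the thresholds
`(β^(j-1)/(αn))^(1/q)` and the vector `z` defined by `z_i = sign(x_i)` on
`D_0(x) ∪ D_1(x)` and `z_i = sign(x_i) β^((j-1)/p)` on `D_j(x)` for `j ≥ 2`:
`‖z‖_p^p ≤ (α+1)n`, `zᵀx ≥ (αn/β)^(1/p) (1 - 1/α)`, and consequently
`xᵀ(z/‖z‖_p) ≥ (α/(β(α+1)))^(1/p) (1 - 1/α)`. -/
theorem stmt19 (p q α β : ℝ) (n : ℕ) (hn : 0 < n) (hp : 1 < p)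
    (hpq : 1 / p + 1 / q = 1) (hα : 1 ≤ α) (hβ : α + 1 ≤ β)
    (x : Fin n → ℝ) (hx : ∑ i, |x i| ^ q = 1)
    (m : ℕ) (hm : m = ⌈Real.logb β (α * n)⌉₊)
    (D : ℕ → Set (Fin n))
    (hD0 : D 0 = {i | |x i| ≤ (α * n) ^ (-(1 / q))})
    (hDj : ∀ j, 0 < j → j ≤ m →
      D j = {i | (β ^ (j - 1) / (α * n)) ^ (1 / q) < |x i| ∧
                 |x i| ≤ (β ^ j / (α * n)) ^ (1 / q)})
    (z : Fin n → ℝ)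
    (hz01 : ∀ i, i ∈ D 0 ∪ D 1 → z i = if 0 ≤ x i then 1 else -1)
    (hzj : ∀ j, 2 ≤ j → j ≤ m → ∀ i ∈ D j,
      z i = (if 0 ≤ x i then 1 else -1) * β ^ (((j : ℝ) - 1) / p)) :
    (∑ i, |z i| ^ p) ≤ (α + 1) * n ∧
    (α * n / β) ^ (1 / p) * (1 - 1 / α) ≤ ∑ i, z i * x i ∧
    (α / (β * (α + 1))) ^ (1 / p) * (1 - 1 / α) ≤
      ∑ i, x i * (z i / (∑ i, |z i| ^ p) ^ (1 / p)) := by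
  have hp0 : (0:ℝ) < p := by linarith
  have hpne : p ≠ 0 := ne_of_gt hp0
  have hq0 : (0:ℝ) < q := by
    have h1 : 1 / p < 1 := (div_lt_one hp0).mpr hp
    have h2 : 0 < 1 / q := by linarith
    exact one_div_pos.mp h2
  have hqne : q ≠ 0 := ne_of_gt hq0
  have hα0 : (0:ℝ) < α := by linarith
  have hβ1 : (1:ℝ) < β := by linarith
  have hβ0 : (0:ℝ) < β := by linarith
  have hn1 : (1:ℝ) ≤ (n:ℝ) := by exact_mod_cast hn
  have hαn0 : (0:ℝ) < α * n := by positivity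
  have hαn1 : (1:ℝ) ≤ α * n := by nlinarith
  have hxq1 : ∀ i, |x i| ^ q ≤ 1 := by
    intro i
    rw [← hx]
    exact Finset.single_le_sum (f := fun i => |x i| ^ q)
      (fun j _ => Real.rpow_nonneg (abs_nonneg _) q) (Finset.mem_univ i)
  set C : ℝ := (α * n / β) ^ (1 / p) with hC
  have hC0 : 0 < C := Real.rpow_pos_of_pos (by positivity) _
  -- key pointwise estimates
  have key : ∀ i, |z i| ^ p ≤ 1 + α * n * |x i| ^ q ∧
      C * (|x i| ^ q - 1 / (α * n)) ≤ z i * x i ∧ 1 ≤ |z i| ^ p := by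
    intro i
    by_cases h0 : |x i| ≤ (α * n) ^ (-(1 / q))
    · -- case i ∈ D 0
      have hzi : z i = if 0 ≤ x i then 1 else -1 := by
        apply hz01 i (Or.inl _)
        rw [hD0]; exact h0
      have habs : |z i| = 1 := by
        rw [hzi]; split_ifs <;> simp
      have hzx : z i * x i = |x i| := by
        rw [hzi]; split_ifs with h
        · rw [abs_of_nonneg h]; ring
        · rw [abs_of_neg (lt_of_not_ge h)]; ring
      have hxs : |x i| ^ q ≤ 1 / (α * n) := by
        have h1 := Real.rpow_le_rpow (abs_nonneg _) h0 hq0.le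
        rwa [← Real.rpow_mul hαn0.le, neg_mul, one_div_mul_cancel hqne,
          Real.rpow_neg_one, ← one_div] at h1
      refine ⟨?_, ?_, ?_⟩
      · rw [habs, Real.one_rpow]
        nlinarith [Real.rpow_nonneg (abs_nonneg (x i)) q]
      · rw [hzx]
        nlinarith [abs_nonneg (x i),
          mul_nonpos_of_nonneg_of_nonpos hC0.le (by linarith : |x i| ^ q - 1 / (α * n) ≤ 0)]
      · rw [habs, Real.one_rpow]
    · -- case i ∈ D j, j ≥ 1
      push_neg at h0
      set t : ℝ := α * n * |x i| ^ q with ht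
      have hxpos : 0 < |x i| := lt_of_le_of_lt (Real.rpow_nonneg hαn0.le _) h0
      have hupos : 0 < |x i| ^ q := Real.rpow_pos_of_pos hxpos q
      have ht1 : 1 < t := by
        have h1 := Real.rpow_lt_rpow (Real.rpow_nonneg hαn0.le _) h0 hq0
        rw [← Real.rpow_mul hαn0.le, neg_mul, one_div_mul_cancel hqne,
          Real.rpow_neg_one] at h1
        calc (1:ℝ) = α * n * (α * n)⁻¹ := by field_simp
          _ < α * n * |x i| ^ q := mul_lt_mul_of_pos_left h1 hαn0
      have ht0 : (0:ℝ) < t := by linarith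
      have htαn : t ≤ α * n := by
        calc t ≤ α * n * 1 := mul_le_mul_of_nonneg_left (hxq1 i) hαn0.le
          _ = α * n := mul_one _
      set j : ℕ := ⌈Real.logb β t⌉₊ with hj
      have hlogpos : 0 < Real.logb β t := Real.logb_pos hβ1 ht1
      have hj1 : 1 ≤ j := Nat.one_le_ceil_iff.mpr hlogpos
      have hjm : j ≤ m := by
        rw [hm]
        exact Nat.ceil_le_ceil (Real.logb_le_logb_of_le hβ1 ht0 htαn)
      obtain ⟨k, hk⟩ : ∃ k, j = k + 1 := ⟨j - 1, by omega⟩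
      have hrlogb : β ^ Real.logb β t = t := Real.rpow_logb hβ0 (ne_of_gt hβ1) ht0
      have hupper : t ≤ β ^ ((k:ℝ) + 1) := by
        rw [← hrlogb]
        apply Real.rpow_le_rpow_of_exponent_le hβ1.le
        have h2 := Nat.le_ceil (Real.logb β t)
        rw [← hj] at h2
        calc Real.logb β t ≤ (j:ℝ) := h2
          _ = (k:ℝ) + 1 := by rw [hk]; push_cast; ring
      have hlower : β ^ (k:ℝ) < t := by
        rw [← hrlogb]
        apply Real.rpow_lt_rpow_of_exponent_lt hβ1
        have h2 : (j:ℝ) < Real.logb β t + 1 := by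
          have := Nat.ceil_lt_add_one hlogpos.le
          rw [← hj] at this; exact this
        rw [hk] at h2; push_cast at h2; linarith
      have hxu : (|x i| ^ q) ^ (1 / q) = |x i| := by
        rw [← Real.rpow_mul (abs_nonneg _), mul_one_div, div_self hqne, Real.rpow_one]
      have hmem : i ∈ D j := by
        rw [hDj j (by omega) hjm]
        have e1 : (β ^ (j - 1) : ℝ) = β ^ (k:ℝ) := by
          rw [hk]; simp [← Real.rpow_natCast]
        have e2 : (β ^ j : ℝ) = β ^ ((k:ℝ) + 1) := by
          rw [hk, ← Real.rpow_natCast]; push_cast; ring_nf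
        constructor
        · show (β ^ (j - 1) / (α * n)) ^ (1 / q) < |x i|
          rw [e1]
          have hdiv : β ^ (k:ℝ) / (α * n) < |x i| ^ q := by
            rw [div_lt_iff₀ hαn0]
            calc β ^ (k:ℝ) < t := hlower
              _ = |x i| ^ q * (α * n) := by rw [ht]; ring
          calc (β ^ (k:ℝ) / (α * n)) ^ (1 / q)
              < (|x i| ^ q) ^ (1 / q) :=
                Real.rpow_lt_rpow (by positivity) hdiv (by positivity)
            _ = |x i| := hxu
        · show |x i| ≤ (β ^ j / (α * n)) ^ (1 / q)
          rw [e2]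
          have hdiv : |x i| ^ q ≤ β ^ ((k:ℝ) + 1) / (α * n) := by
            rw [le_div_iff₀ hαn0]
            calc |x i| ^ q * (α * n) = t := by rw [ht]; ring
              _ ≤ β ^ ((k:ℝ) + 1) := hupper
          calc |x i| = (|x i| ^ q) ^ (1 / q) := hxu.symm
            _ ≤ (β ^ ((k:ℝ) + 1) / (α * n)) ^ (1 / q) :=
                Real.rpow_le_rpow hupos.le hdiv (by positivity)
      have hzi : z i = (if 0 ≤ x i then 1 else -1) * β ^ ((k:ℝ) / p) := by
        rcases Nat.eq_zero_or_pos k with hk0 | hk1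
        · rw [hk0]
          simp only [Nat.cast_zero, zero_div, Real.rpow_zero, mul_one]
          apply hz01 i (Or.inr _)
          have hj11 : (1:ℕ) = j := by omega
          rw [hj11]; exact hmem
        · have h2 := hzj j (by omega) hjm i hmem
          rw [h2, hk]; push_cast; ring_nf
      have habs : |z i| = β ^ ((k:ℝ) / p) := by
        rw [hzi, abs_mul, abs_of_nonneg (Real.rpow_nonneg hβ0.le _)]
        split_ifs <;> simp
      have habsp : |z i| ^ p = β ^ (k:ℝ) := by
        rw [habs, ← Real.rpow_mul hβ0.le, div_mul_cancel₀ _ hpne]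
      have hzx : z i * x i = β ^ ((k:ℝ) / p) * |x i| := by
        rw [hzi]; split_ifs with h
        · rw [abs_of_nonneg h]; ring
        · rw [abs_of_neg (lt_of_not_ge h)]; ring
      refine ⟨?_, ?_, ?_⟩
      · rw [habsp]; linarith
      · calc C * (|x i| ^ q - 1 / (α * n)) ≤ C * |x i| ^ q := by
              have h3 : 0 < 1 / (α * n) := by positivity
              nlinarith
          _ = ((α * n / β) * |x i| ^ q) ^ (1 / p) * (|x i| ^ q) ^ (1 / q) := by
              rw [Real.mul_rpow (by positivity) hupos.le]
              nth_rewrite 1 [show |x i| ^ q = (|x i| ^ q) ^ (1/p) * (|x i| ^ q) ^ (1/q) from by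
                rw [← Real.rpow_add hupos, hpq, Real.rpow_one]]
              ring
          _ ≤ (β ^ (k:ℝ)) ^ (1 / p) * |x i| := by
              rw [hxu]
              apply mul_le_mul_of_nonneg_right _ (abs_nonneg _)
              apply Real.rpow_le_rpow (by positivity) _ (by positivity)
              rw [div_mul_eq_mul_div, div_le_iff₀ hβ0]
              calc α * n * |x i| ^ q = t := rfl
                _ ≤ β ^ ((k:ℝ) + 1) := hupper
                _ = β ^ (k:ℝ) * β := by rw [Real.rpow_add hβ0, Real.rpow_one]
          _ = β ^ ((k:ℝ) / p) * |x i| := by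
              rw [← Real.rpow_mul hβ0.le, mul_one_div]
          _ = z i * x i := hzx.symm
      · rw [habsp]
        exact Real.one_le_rpow hβ1.le (by positivity)
  -- part 1
  have part1 : (∑ i, |z i| ^ p) ≤ (α + 1) * n := by
    calc ∑ i, |z i| ^ p ≤ ∑ i, (1 + α * n * |x i| ^ q) :=
          Finset.sum_le_sum (fun i _ => (key i).1)
      _ = n + α * n * 1 := by
          rw [Finset.sum_add_distrib, Finset.sum_const, ← Finset.mul_sum, hx]
          simp
      _ = (α + 1) * n := by ring
  -- part 2
  have part2 : C * (1 - 1 / α) ≤ ∑ i, z i * x i := by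
    have hsum : ∑ i, (|x i| ^ q - 1 / (α * n)) = 1 - 1 / α := by
      rw [Finset.sum_sub_distrib, hx, Finset.sum_const, Finset.card_univ,
        Fintype.card_fin, nsmul_eq_mul]
      have h4 : (n:ℝ) * (1 / (α * n)) = 1 / α := by
        field_simp
      rw [h4]
    calc C * (1 - 1 / α) = ∑ i, C * (|x i| ^ q - 1 / (α * n)) := by
          rw [← Finset.mul_sum, hsum]
      _ ≤ ∑ i, z i * x i := Finset.sum_le_sum (fun i _ => (key i).2.1)
  refine ⟨part1, part2, ?_⟩
  -- part 3
  set N : ℝ := ∑ i, |z i| ^ p with hN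
  have hN1 : (n:ℝ) ≤ N := by
    calc (n:ℝ) = ∑ _i : Fin n, (1:ℝ) := by
          rw [Finset.sum_const, Finset.card_univ, Fintype.card_fin, nsmul_eq_mul, mul_one]
      _ ≤ N := Finset.sum_le_sum (fun i _ => (key i).2.2)
  have hN0 : 0 < N := by linarith
  have hNp : 0 < N ^ (1/p) := Real.rpow_pos_of_pos hN0 _
  have h1a : (0:ℝ) ≤ 1 - 1 / α := by
    have : 1 / α ≤ 1 := by rw [div_le_one hα0]; exact hα
    linarith
  have hnum : 0 ≤ ∑ i, z i * x i := le_trans (by positivity) part2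
  have hNle : N ^ (1/p) ≤ ((α + 1) * n) ^ (1/p) :=
    Real.rpow_le_rpow hN0.le part1 (by positivity)
  have hE : ∑ i, x i * (z i / N ^ (1/p)) = (∑ i, z i * x i) / N ^ (1/p) := by
    rw [Finset.sum_div]
    exact Finset.sum_congr rfl (fun i _ => by ring)
  have hTE : (α / (β * (α + 1))) ^ (1/p) = C / ((α + 1) * n) ^ (1/p) := by
    rw [hC, ← Real.div_rpow (by positivity) (by positivity)]
    congr 1
    field_simp
  calc (α / (β * (α + 1))) ^ (1/p) * (1 - 1/α)
      = C * (1 - 1/α) / ((α + 1) * n) ^ (1/p) := by rw [hTE]; ring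
    _ ≤ (∑ i, z i * x i) / ((α + 1) * n) ^ (1/p) := by
        gcongr
    _ ≤ (∑ i, z i * x i) / N ^ (1/p) := by
        gcongr
    _ = ∑ i, x i * (z i / N ^ (1/p)) := hE.symm
end
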